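/- arXiv:1403.7761 — 2 statements merged into one kernel-verified Lean document; each statement's English description precedes it below -/
import Mathlib

section
/- For the discrete-time risk process with i.i.d. ℕ-valued claims having mean μ = E(Y_1) < 1, the infinite-horizon ruin probability equals P_u(T_0 < ∞) = (1 − μ) Σ_{j=u+1}^{∞} p^{*(j−u)}_j for every integer u ≥ 0. -/
open MeasureTheory ProbabilityTheory Filter
open scoped ENNReal Topology

noncomputable section

variable {Ω : Type*} [MeasureSpace Ω]

/-- Aggregate claims `S_t = Y_1 + ... + Y_t`. -/
def aggClaims (Y : ℕ → Ω → ℕ) (t : ℕ) (ω : Ω) : ℕ := ∑ i ∈ Finset.range t, Y i ω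

/-- Risk process `R_t = u + t - S_t`. -/
def riskProc (Y : ℕ → Ω → ℕ) (u : ℤ) (t : ℕ) (ω : Ω) : ℤ := u + t - aggClaims Y t ω

/-- Classical ruin time `T_0 = inf {t ≥ 1 : R_t ≤ 0}`. -/
def ruinTime (Y : ℕ → Ω → ℕ) (u : ℤ) (ω : Ω) : ℕ∞ :=
  sInf ((fun t : ℕ => (t : ℕ∞)) '' {t : ℕ | 1 ≤ t ∧ riskProc Y u t ω ≤ 0})

namespace RuinAux



/-- Deterministic skip-free downward crossing lemma. -/
lemma skipfree_exists_eq (f : ℕ → ℤ) (hstep : ∀ t, f t - 1 ≤ f (t + 1))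
    (u : ℤ) (m M : ℕ) (hm : u ≤ f m) (hM : ∀ t, M ≤ t → f t < u) :
    ∃ m', m ≤ m' ∧ f m' = u := by
  classical
  set P : ℕ → Prop := fun t => m ≤ t ∧ u ≤ f t with hP
  have hPm : P m := ⟨le_refl m, hm⟩
  have hmM : m ≤ M := by
    by_contra h
    exact absurd (hM m (by omega)) (by simp [not_lt]; exact hm)
  set m' := Nat.findGreatest P M with hm'
  have hPm' : P m' := Nat.findGreatest_spec hmM hPm
  have hnext : f (m' + 1) < u := by
    by_cases h : m' + 1 ≤ M
    · have : ¬ P (m' + 1) := Nat.findGreatest_is_greatest (by omega) h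
      simp only [hP, not_and, not_le] at this
      exact this (by omega)
    · exact hM _ (by omega)
  refine ⟨m', hPm'.1, ?_⟩
  have := hstep m'
  have := hPm'.2
  omega

section Cycle

variable (y : ℕ → ℕ) (n : ℕ)

/-- Partial sums of `1 - y (i % n)`. -/
def partA (t : ℕ) : ℤ := (t : ℤ) - ∑ i ∈ Finset.range t, (y (i % n) : ℤ)

/-- Rotation `r` keeps all partial sums strictly below the diagonal. -/
def goodRot (r : ℕ) : Prop :=
  ∀ t ∈ Finset.Icc 1 n, (∑ i ∈ Finset.range t, y ((r + i) % n)) < t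

/-- generic window-count lemma for an `n`-periodic predicate -/
lemma window_const (Q : ℕ → Prop) [DecidablePred Q] (hQ : ∀ r, Q r ↔ Q (r + n)) (k : ℕ) :
    ((Finset.Ico k (k + n)).filter Q).card = ((Finset.range n).filter Q).card := by
  induction k with
  | zero => rw [Nat.zero_add, Finset.range_eq_Ico]
  | succ k ih =>
    rw [← ih]
    have hf : ∀ s : Finset ℕ, (s.filter Q).card = ∑ i ∈ s, if Q i then 1 else 0 :=
      fun s => Finset.card_filter Q s
    rw [hf, hf]
    have e1 : ∑ i ∈ Finset.Ico k (k + n + 1), (if Q i then 1 else 0)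
        = (∑ i ∈ Finset.Ico k (k + n), if Q i then 1 else 0) + (if Q (k + n) then 1 else 0) :=
      Finset.sum_Ico_succ_top (by omega) _
    have e2 : ∑ i ∈ Finset.Ico k (k + n + 1), (if Q i then 1 else 0)
        = (if Q k then 1 else 0) + ∑ i ∈ Finset.Ico (k + 1) (k + n + 1), (if Q i then 1 else 0) :=
      Finset.sum_eq_sum_Ico_succ_bot (by omega) _
    have e3 : (if Q (k + n) then (1:ℕ) else 0) = (if Q k then 1 else 0) := by
      by_cases h : Q k
      · simp [h, (hQ k).mp h]
      · simp only [h, if_false, ite_eq_right_iff]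
        intro hh; exact absurd ((hQ k).mpr hh) h
    have : k + 1 + n = k + n + 1 := by omega
    rw [this]
    omega

variable {y n}

lemma partA_zero : partA y n 0 = 0 := by simp [partA]

lemma partA_succ (t : ℕ) : partA y n (t + 1) = partA y n t + 1 - (y (t % n) : ℤ) := by
  simp [partA, Finset.sum_range_succ]; ring

lemma partA_add (r t : ℕ) :
    partA y n (r + t) - partA y n r = (t : ℤ) - ∑ i ∈ Finset.range t, (y ((r + i) % n) : ℤ) := by
  simp only [partA, Finset.sum_range_add]
  push_cast
  ring

lemma goodRot_iff (r : ℕ) :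
    goodRot y n r ↔ ∀ t ∈ Finset.Icc 1 n, partA y n r + 1 ≤ partA y n (r + t) := by
  unfold goodRot
  refine forall₂_congr (fun t ht => ?_)
  have h2 := partA_add (y := y) (n := n) r t
  have hcast : ((∑ i ∈ Finset.range t, y ((r + i) % n) : ℕ) : ℤ)
      = ∑ i ∈ Finset.range t, (y ((r + i) % n) : ℤ) := by push_cast; ring
  constructor
  · intro h
    have : ((∑ i ∈ Finset.range t, y ((r + i) % n) : ℕ) : ℤ) < (t : ℤ) := by exact_mod_cast h
    omega
  · intro h
    have : ((∑ i ∈ Finset.range t, y ((r + i) % n) : ℕ) : ℤ) < (t : ℤ) := by omega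
    exact_mod_cast this

lemma partA_period (hn : 0 < n) (t : ℕ) :
    partA y n (t + n) = partA y n t + partA y n n := by
  induction t with
  | zero => simp [partA_zero]
  | succ t ih =>
    have h1 : t + 1 + n = (t + n) + 1 := by omega
    rw [h1, partA_succ, ih, Nat.add_mod_right, partA_succ]
    ring

lemma partA_mul_period (hn : 0 < n) (q t : ℕ) :
    partA y n (t + n * q) = partA y n t + (q : ℤ) * partA y n n := by
  induction q with
  | zero => simp
  | succ q ih =>
    have h1 : t + n * (q + 1) = (t + n * q) + n := by ring
    rw [h1, partA_period hn, ih]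
    push_cast
    ring

lemma partA_decomp (hn : 0 < n) (t : ℕ) :
    partA y n t = partA y n (t % n) + ((t / n : ℕ) : ℤ) * partA y n n := by
  conv_lhs => rw [← Nat.mod_add_div t n]
  exact partA_mul_period hn _ _

lemma partA_n (hn : 0 < n) :
    partA y n n = (n : ℤ) - ((∑ i ∈ Finset.range n, y i : ℕ) : ℤ) := by
  unfold partA
  congr 1
  rw [Nat.cast_sum]
  exact Finset.sum_congr rfl (fun i hi => by
    rw [Nat.mod_eq_of_lt (Finset.mem_range.mp hi)])


theorem cycle_count (hn : 0 < n) [DecidablePred (goodRot y n)] :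
    ((Finset.range n).filter (goodRot y n)).card = n - ∑ i ∈ Finset.range n, y i := by
  classical
  set s : ℤ := partA y n n with hs_def
  by_cases hs : s ≤ 0
  · -- no good rotation
    have hempty : (Finset.range n).filter (goodRot y n) = ∅ := by
      refine Finset.filter_false_of_mem (fun r hr => ?_)
      rw [goodRot_iff]
      push_neg
      refine ⟨n, Finset.mem_Icc.mpr ⟨hn, le_refl n⟩, ?_⟩
      rw [partA_period hn, ← hs_def]
      omega
    rw [hempty]
    have := partA_n (y := y) (hn := hn)
    have hle : n ≤ ∑ i ∈ Finset.range n, y i := by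
      have : ((n : ℤ)) ≤ ((∑ i ∈ Finset.range n, y i : ℕ) : ℤ) := by omega
      exact_mod_cast this
    simp [Nat.sub_eq_zero_of_le hle]
  · push_neg at hs
    have hs1 : (1 : ℤ) ≤ s := hs
    -- minimum of partA over a period
    have hne : (Finset.range n).Nonempty := ⟨0, Finset.mem_range.mpr hn⟩
    set m : ℤ := (Finset.range n).inf' hne (partA y n) with hm_def
    have hm_le : ∀ j, j < n → m ≤ partA y n j := fun j hj =>
      Finset.inf'_le _ (Finset.mem_range.mpr hj)
    obtain ⟨j₀, hj₀, hj₀m⟩ := Finset.exists_mem_eq_inf' hne (partA y n)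
    rw [Finset.mem_range] at hj₀
    rw [← hm_def] at hj₀m
    have hAm : ∀ t, m ≤ partA y n t := by
      intro t
      rw [partA_decomp hn t, ← hs_def]
      have h1 : m ≤ partA y n (t % n) := hm_le _ (Nat.mod_lt _ hn)
      have h2 : (0 : ℤ) ≤ ((t / n : ℕ) : ℤ) * s := by positivity
      omega
    have hAbig : ∀ (v : ℤ) (t : ℕ), n * ((v - m).toNat + 1) ≤ t → v < partA y n t := by
      intro v t ht
      have hdiv : (v - m).toNat + 1 ≤ t / n :=
        (Nat.le_div_iff_mul_le hn).mpr (by rwa [Nat.mul_comm] at ht)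
      rw [partA_decomp hn t, ← hs_def]
      have h1 : m ≤ partA y n (t % n) := hm_le _ (Nat.mod_lt _ hn)
      have h2 : ((t / n : ℕ) : ℤ) ≥ ((v - m).toNat : ℤ) + 1 := by exact_mod_cast hdiv
      have h3 : ((t / n : ℕ) : ℤ) ≤ ((t / n : ℕ) : ℤ) * s :=
        le_mul_of_one_le_right (by positivity) hs1
      have h4 : v - m ≤ ((v - m).toNat : ℤ) := Int.self_le_toNat _
      omega
    -- the "last time at level v" function
    set L : ℤ → ℕ := fun v => Nat.findGreatest (fun t => partA y n t ≤ v) (n * ((v - m).toNat + 1))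
      with hL_def
    have hL_ge : ∀ (v : ℤ) (t : ℕ), partA y n t ≤ v → t ≤ L v := by
      intro v t h
      by_cases ht : t ≤ n * ((v - m).toNat + 1)
      · exact Nat.le_findGreatest ht h
      · exact absurd (hAbig v t (by omega)) (by omega)
    have hL_le : ∀ v : ℤ, m ≤ v → partA y n (L v) ≤ v := by
      intro v hv
      have hj₀B : j₀ ≤ n * ((v - m).toNat + 1) := by
        have h5 : n ≤ n * ((v - m).toNat + 1) :=
          Nat.le_mul_of_pos_right n (by omega)
        omega
      have h8 := Nat.findGreatest_spec (P := fun t => partA y n t ≤ v)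
        (m := j₀) hj₀B (show partA y n j₀ ≤ v by rw [← hj₀m]; exact hv)
      exact h8
    have hL_eq : ∀ v : ℤ, m ≤ v → partA y n (L v) = v := by
      intro v hv
      by_contra hne'
      have h1 : partA y n (L v) ≤ v := hL_le v hv
      have h2 : partA y n (L v + 1) ≤ v := by
        rw [partA_succ]
        have : (0:ℤ) ≤ (y (L v % n) : ℤ) := by positivity
        omega
      have := hL_ge v (L v + 1) h2
      omega
    -- the record predicate
    set Pr : ℕ → Prop := fun r => ∀ t, 1 ≤ t → partA y n r < partA y n (r + t) with hPr_def
    have hP_L : ∀ v : ℤ, m ≤ v → Pr (L v) := by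
      intro v hv t ht
      by_contra hc
      push_neg at hc
      rw [hL_eq v hv] at hc
      have := hL_ge v (L v + t) hc
      omega
    have hP_eq : ∀ r, Pr r → r = L (partA y n r) := by
      intro r hPr
      have h1 : r ≤ L (partA y n r) := hL_ge _ r (le_refl _)
      rcases eq_or_lt_of_le h1 with h | h
      · exact h
      · exfalso
        have ht : 1 ≤ L (partA y n r) - r := by omega
        have := hPr _ ht
        rw [Nat.add_sub_cancel' (le_of_lt h)] at this
        rw [hL_eq _ (hAm r)] at this
        omega
    have hLmono : ∀ v w : ℤ, m ≤ v → v ≤ w → L v ≤ L w := by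
      intro v w hv hvw
      exact hL_ge w (L v) (by rw [hL_eq v hv]; omega)
    have hLstrict : ∀ v w : ℤ, m ≤ v → m ≤ w → v < w → L v < L w := by
      intro v w hv hw hvw
      rcases eq_or_lt_of_le (hLmono v w hv (le_of_lt hvw)) with h | h
      · exfalso
        have := hL_eq v hv
        have := hL_eq w hw
        rw [h] at *
        omega
      · exact h
    have hLshift : ∀ v : ℤ, m ≤ v → L (v + s) = L v + n := by
      intro v hv
      have hvs : m ≤ v + s := by omega
      have hge : L v + n ≤ L (v + s) := by
        apply hL_ge
        rw [partA_period hn, hL_eq v hv, ← hs_def]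
      have hle : L (v + s) ≤ L v + n := by
        by_cases ht : L (v + s) < n
        · omega
        · push_neg at ht
          have hdecomp : partA y n (L (v + s) - n + n) = partA y n (L (v + s) - n) + s :=
            partA_period hn _
          rw [Nat.sub_add_cancel ht] at hdecomp
          have : partA y n (L (v + s) - n) ≤ v := by
            rw [hL_eq _ hvs] at hdecomp; omega
          have := hL_ge v _ this
          omega
      omega
    have hPper : ∀ r, Pr r ↔ Pr (r + n) := by
      intro r
      constructor
      · intro h t ht
        have h1 : r + n + t = (r + t) + n := by omega
        rw [h1, partA_period hn, partA_period hn]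
        have := h t ht
        omega
      · intro h t ht
        have h1 : r + n + t = (r + t) + n := by omega
        have := h t ht
        rw [h1, partA_period hn, partA_period hn] at this
        omega
    have hgoodP : ∀ r, goodRot y n r ↔ Pr r := by
      intro r
      rw [goodRot_iff]
      constructor
      · intro h t ht
        induction t using Nat.strong_induction_on with
        | _ t ih =>
          by_cases htn : t ≤ n
          · have := h t (Finset.mem_Icc.mpr ⟨ht, htn⟩)
            omega
          · push_neg at htn
            have h1 : r + t = (r + (t - n)) + n := by omega
            rw [h1, partA_period hn]
            have := ih (t - n) (by omega) (by omega)
            omega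
      · intro h t ht
        rw [Finset.mem_Icc] at ht
        have := h t ht.1
        omega
    -- count the records in the window starting at L m
    have himage : (Finset.Ico (L m) (L m + n)).filter Pr
        = (Finset.range s.toNat).image (fun j : ℕ => L (m + (j : ℤ))) := by
      ext r
      simp only [Finset.mem_filter, Finset.mem_Ico, Finset.mem_image, Finset.mem_range]
      constructor
      · rintro ⟨⟨hr1, hr2⟩, hPr⟩
        have hrL := hP_eq r hPr
        have hrm : m ≤ partA y n r := hAm r
        have hlt : partA y n r < m + s := by
          by_contra hc
          push_neg at hc
          have h1 : L (m + s) ≤ L (partA y n r) := hLmono _ _ (by omega) hc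
          rw [hLshift m (le_refl m)] at h1
          omega
        refine ⟨(partA y n r - m).toNat, ?_, ?_⟩
        · rw [Int.toNat_lt_toNat (by omega)]; omega
        · have : m + ((partA y n r - m).toNat : ℤ) = partA y n r := by
            rw [Int.toNat_of_nonneg (by omega)]; ring
          rw [this, ← hrL]
      · rintro ⟨j, hj, rfl⟩
        have hjs : (j : ℤ) < s := by
          have h6 : (j : ℤ) < (s.toNat : ℤ) := by exact_mod_cast hj
          rwa [Int.toNat_of_nonneg (by omega)] at h6
        refine ⟨⟨hLmono m (m + j) le_rfl (by omega), ?_⟩, hP_L _ (by omega)⟩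
        have h7 := hLstrict (m + j) (m + s) (by omega) (by omega) (by omega)
        rw [hLshift m le_rfl] at h7
        omega
    have hinj : Set.InjOn (fun j : ℕ => L (m + (j : ℤ))) ↑(Finset.range s.toNat) := by
      intro a _ b _ hab
      have ha' := hL_eq (m + (a : ℤ)) (by omega)
      have hb' := hL_eq (m + (b : ℤ)) (by omega)
      simp only at hab
      rw [hab, hb'] at ha'
      have : (a : ℤ) = b := by omega
      exact_mod_cast this
    have hcard1 : ((Finset.range n).filter (goodRot y n)).card
        = ((Finset.range n).filter Pr).card := by
      congr 1
      exact Finset.filter_congr (fun x _ => hgoodP x)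
    have hcard2 := window_const n Pr hPper (L m)
    rw [hcard1, ← hcard2, himage, Finset.card_image_of_injOn hinj, Finset.card_range,
      hs_def, partA_n hn, Int.toNat_sub]

end Cycle



section Prob
variable [IsProbabilityMeasure (ℙ : Measure Ω)]
variable (Y : ℕ → Ω → ℕ)

/-- the common claim-size distribution -/
def pY (k : ℕ) : ℝ≥0∞ := ℙ {ω | Y 0 ω = k}

variable {Y}

lemma atomSet_measurable (hY : ∀ i, Measurable (Y i)) {m : ℕ} (e : Fin m → ℕ)
    (x : Fin m → ℕ) : MeasurableSet {ω : Ω | ∀ i, Y (e i) ω = x i} := by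
  have : {ω : Ω | ∀ i, Y (e i) ω = x i} = ⋂ i, (Y (e i)) ⁻¹' {x i} := by
    ext ω; simp [Set.mem_iInter]
  rw [this]
  exact MeasurableSet.iInter fun i => (hY _) (MeasurableSet.singleton _)

lemma atom_prob (hY : ∀ i, Measurable (Y i))
    (hindep : iIndepFun Y ℙ)
    (hid : ∀ i, IdentDistrib (Y i) (Y 0) ℙ ℙ)
    {m : ℕ} (e : Fin m → ℕ) (he : Function.Injective e) (x : Fin m → ℕ) :
    ℙ {ω : Ω | ∀ i, Y (e i) ω = x i} = ∏ i, pY Y (x i) := by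
  classical
  have key := hindep.measure_inter_preimage_eq_mul (Finset.image e Finset.univ)
      (sets := fun j => {k | ∀ i, e i = j → x i = k})
      (fun j _ => MeasurableSet.of_discrete)
  have hset : (⋂ j ∈ Finset.image e Finset.univ, Y j ⁻¹' {k | ∀ i, e i = j → x i = k})
      = {ω : Ω | ∀ i, Y (e i) ω = x i} := by
    ext ω
    simp only [Set.mem_iInter, Finset.mem_image, Finset.mem_univ, true_and, Set.mem_preimage,
      Set.mem_setOf_eq]
    constructor
    · intro h i
      exact (h (e i) ⟨i, rfl⟩ i rfl).symm
    · rintro h j ⟨i, rfl⟩ i' hi'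
      rw [he hi', h i]
  have hprod : ∏ j ∈ Finset.image e Finset.univ, ℙ (Y j ⁻¹' {k | ∀ i, e i = j → x i = k})
      = ∏ i, pY Y (x i) := by
    rw [Finset.prod_image (fun i _ i' _ h => he h)]
    refine Finset.prod_congr rfl (fun i _ => ?_)
    have h1 : {k | ∀ i', e i' = e i → x i' = k} = {x i} := by
      ext k
      simp only [Set.mem_setOf_eq, Set.mem_singleton_iff]
      constructor
      · intro h; exact (h i rfl).symm
      · rintro rfl i' hi'; rw [he hi']
    rw [h1, (hid (e i)).measure_mem_eq (MeasurableSet.singleton _)]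
    rfl
  rw [hset] at key
  rw [key, hprod]

/-- a tuple event -/
def tev {m : ℕ} (e : Fin m → ℕ) (E : Set (Fin m → ℕ)) : Set Ω :=
  {ω : Ω | (fun i => Y (e i) ω) ∈ E}

lemma tuple_prob (hY : ∀ i, Measurable (Y i))
    (hindep : iIndepFun Y ℙ)
    (hid : ∀ i, IdentDistrib (Y i) (Y 0) ℙ ℙ)
    {m : ℕ} (e : Fin m → ℕ) (he : Function.Injective e) (E : Set (Fin m → ℕ)) :
    ℙ (tev (Y := Y) e E) = ∑' x : E, ∏ i, pY Y ((x : Fin m → ℕ) i) := by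
  have hset : tev (Y := Y) e E
      = ⋃ x : E, {ω : Ω | ∀ i, Y (e i) ω = (x : Fin m → ℕ) i} := by
    ext ω
    simp only [tev, Set.mem_setOf_eq, Set.mem_iUnion]
    constructor
    · intro h
      exact ⟨⟨_, h⟩, fun i => rfl⟩
    · rintro ⟨x, hx⟩
      have hfun : (fun i => Y (e i) ω) = (x : Fin m → ℕ) := funext fun i => hx i
      rw [hfun]; exact x.2
  rw [hset, measure_iUnion ?_ (fun x => atomSet_measurable hY e _)]
  · exact tsum_congr (fun x => atom_prob hY hindep hid e he _)
  · intro x x' hxx'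
    rw [Function.onFun, Set.disjoint_left]
    intro ω hω hω'
    exact hxx' (Subtype.ext (funext fun i => (hω i).symm.trans (hω' i)))

/-- the law of an injectively-indexed tuple does not depend on the index choice -/
lemma tuple_prob_inv (hY : ∀ i, Measurable (Y i))
    (hindep : iIndepFun Y ℙ)
    (hid : ∀ i, IdentDistrib (Y i) (Y 0) ℙ ℙ)
    {m : ℕ} (e e' : Fin m → ℕ) (he : Function.Injective e) (he' : Function.Injective e')
    (E : Set (Fin m → ℕ)) :
    ℙ (tev (Y := Y) e E) = ℙ (tev (Y := Y) e' E) := by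
  rw [tuple_prob hY hindep hid e he E, tuple_prob hY hindep hid e' he' E]

/-- splitting an initial segment from a shifted block -/
lemma split_prob (hY : ∀ i, Measurable (Y i))
    (hindep : iIndepFun Y ℙ)
    (hid : ∀ i, IdentDistrib (Y i) (Y 0) ℙ ℙ)
    (t r : ℕ) (E₁ : Set (Fin t → ℕ)) (E₂ : Set (Fin r → ℕ)) :
    ℙ (tev (Y := Y) (fun i => (i : ℕ)) E₁ ∩ tev (Y := Y) (fun j => t + (j : ℕ)) E₂)
      = ℙ (tev (Y := Y) (fun i => (i : ℕ)) E₁) * ℙ (tev (Y := Y) (fun j => t + (j : ℕ)) E₂) := by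
  classical
  set E : Set (Fin (t + r) → ℕ) :=
    {z | (z ∘ Fin.castAdd r) ∈ E₁ ∧ (z ∘ Fin.natAdd t) ∈ E₂} with hE
  have hinj1 : Function.Injective (fun i : Fin (t + r) => (i : ℕ)) :=
    fun a b hab => Fin.ext hab
  have hinj2 : Function.Injective (fun i : Fin t => (i : ℕ)) :=
    fun a b hab => Fin.ext hab
  have hinj3 : Function.Injective (fun j : Fin r => t + (j : ℕ)) := by
    intro a b hab
    simp only at hab
    exact Fin.ext (by omega)
  have hset : tev (Y := Y) (fun i => (i : ℕ)) E₁ ∩ tev (Y := Y) (fun j => t + (j : ℕ)) E₂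
      = tev (Y := Y) (fun i : Fin (t + r) => (i : ℕ)) E := by
    ext ω
    simp only [tev, Set.mem_inter_iff, Set.mem_setOf_eq, hE, Function.comp_def]
    have h1 : (fun i : Fin t => Y ((Fin.castAdd r i : Fin (t + r)) : ℕ) ω)
        = fun i : Fin t => Y (i : ℕ) ω := funext fun i => by simp
    have h2 : (fun j : Fin r => Y ((Fin.natAdd t j : Fin (t + r)) : ℕ) ω)
        = fun j : Fin r => Y (t + (j : ℕ)) ω := funext fun j => by simp
    rw [h1, h2]
  rw [hset, tuple_prob hY hindep hid _ hinj1 E, tuple_prob hY hindep hid _ hinj2 E₁,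
    tuple_prob hY hindep hid _ hinj3 E₂]
  have hmem : ∀ p : ↥E₁ × ↥E₂, Fin.append (p.1 : Fin t → ℕ) (p.2 : Fin r → ℕ) ∈ E := by
    rintro ⟨x, y⟩
    constructor
    · have h1 : (Fin.append (x : Fin t → ℕ) (y : Fin r → ℕ)) ∘ Fin.castAdd r = (x : Fin t → ℕ) :=
        funext fun i => Fin.append_left _ _ i
      rw [h1]; exact x.2
    · have h2 : (Fin.append (x : Fin t → ℕ) (y : Fin r → ℕ)) ∘ Fin.natAdd t = (y : Fin r → ℕ) :=
        funext fun j => Fin.append_right _ _ j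
      rw [h2]; exact y.2
  let eqv : ↥E₁ × ↥E₂ ≃ ↥E :=
    { toFun := fun p => ⟨Fin.append (p.1 : Fin t → ℕ) (p.2 : Fin r → ℕ), hmem p⟩
      invFun := fun z => ⟨⟨(z : Fin (t+r) → ℕ) ∘ Fin.castAdd r, z.2.1⟩,
                ⟨(z : Fin (t+r) → ℕ) ∘ Fin.natAdd t, z.2.2⟩⟩
      left_inv := by
        rintro ⟨x, y⟩
        have h1 : (Fin.append (x : Fin t → ℕ) (y : Fin r → ℕ)) ∘ Fin.castAdd r
            = (x : Fin t → ℕ) := funext fun i => Fin.append_left _ _ i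
        have h2 : (Fin.append (x : Fin t → ℕ) (y : Fin r → ℕ)) ∘ Fin.natAdd t
            = (y : Fin r → ℕ) := funext fun j => Fin.append_right _ _ j
        exact Prod.ext (Subtype.ext h1) (Subtype.ext h2)
      right_inv := by
        rintro ⟨z, hz⟩
        exact Subtype.ext Fin.append_castAdd_natAdd }
  calc ∑' x : E, ∏ i, pY Y ((x : Fin (t + r) → ℕ) i)
      = ∑' p : ↥E₁ × ↥E₂, ∏ i, pY Y (((eqv p : Fin (t + r) → ℕ)) i) :=
        (eqv.tsum_eq (fun x : E => ∏ i, pY Y ((x : Fin (t + r) → ℕ) i))).symm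
    _ = ∑' p : ↥E₁ × ↥E₂,
          (∏ i, pY Y ((p.1 : Fin t → ℕ) i)) * ∏ j, pY Y ((p.2 : Fin r → ℕ) j) := by
        refine tsum_congr (fun p => ?_)
        have hco : (eqv p : Fin (t + r) → ℕ)
            = Fin.append (p.1 : Fin t → ℕ) (p.2 : Fin r → ℕ) := by rfl
        rw [hco, Fin.prod_univ_add]
        congr 1
        · exact Finset.prod_congr rfl fun i _ => by rw [Fin.append_left]
        · exact Finset.prod_congr rfl fun j _ => by rw [Fin.append_right]
    _ = (∑' x : E₁, ∏ i, pY Y ((x : Fin t → ℕ) i))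
          * ∑' x : E₂, ∏ j, pY Y ((x : Fin r → ℕ) j) := by
        rw [ENNReal.tsum_prod
          (f := fun (a : ↥E₁) (b : ↥E₂) =>
            (∏ i, pY Y ((a : Fin t → ℕ) i)) * ∏ j, pY Y ((b : Fin r → ℕ) j))]
        simp_rw [ENNReal.tsum_mul_left, ENNReal.tsum_mul_right]

end Prob

section Risk
variable [IsProbabilityMeasure (ℙ : Measure Ω)]
variable {Y : ℕ → Ω → ℕ}

/-- visit of the walk to the diagonal level `u` at time `m` -/
def Vis (Y : ℕ → Ω → ℕ) (u m : ℕ) : Set Ω := {ω | aggClaims Y m ω = u + m}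

/-- first visit at time `k+1` -/
def Fir (Y : ℕ → Ω → ℕ) (u k : ℕ) : Set Ω :=
  {ω | aggClaims Y (k + 1) ω = u + (k + 1) ∧ ∀ t, 1 ≤ t → t ≤ k → aggClaims Y t ω ≠ u + t}

/-- probability of return to the diagonal -/
def gE (Y : ℕ → Ω → ℕ) (r : ℕ) : ℝ≥0∞ := ℙ (Vis Y 0 r)

lemma aggClaims_measurable (hY : ∀ i, Measurable (Y i)) (t : ℕ) : Measurable (aggClaims Y t) :=
  Finset.measurable_sum _ (fun i _ => hY i)

lemma vis_measurable (hY : ∀ i, Measurable (Y i)) (u m : ℕ) : MeasurableSet (Vis Y u m) :=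
  (aggClaims_measurable hY m) (MeasurableSet.singleton _)

lemma fir_measurable (hY : ∀ i, Measurable (Y i)) (u k : ℕ) : MeasurableSet (Fir Y u k) := by
  have : Fir Y u k = Vis Y u (k+1) ∩ ⋂ t ∈ Finset.Icc 1 k, (Vis Y u t)ᶜ := by
    ext ω
    simp only [Fir, Vis, Set.mem_inter_iff, Set.mem_setOf_eq, Set.mem_iInter, Set.mem_compl_iff,
      Finset.mem_Icc]
    tauto
  rw [this]
  exact (vis_measurable hY u (k+1)).inter
    (MeasurableSet.biInter (Finset.countable_toSet _) fun t _ => (vis_measurable hY u t).compl)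

lemma fir_disjoint (u : ℕ) : Pairwise (Function.onFun Disjoint (Fir Y u)) := by
  have key : ∀ j k, j < k → ∀ ω, ω ∈ Fir Y u j → ω ∉ Fir Y u k := by
    intro j k h ω hω hω'
    exact hω'.2 (j + 1) (by omega) (by omega) hω.1
  intro j k hjk
  rw [Function.onFun, Set.disjoint_left]
  rcases lt_or_gt_of_ne hjk with h | h
  · intro ω hω
    exact key j k h ω hω
  · intro ω hω hω'
    exact key k j h ω hω' hω

lemma union_vis_eq_union_fir (u : ℕ) : (⋃ k, Vis Y u (k + 1)) = ⋃ k, Fir Y u k := by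
  classical
  ext ω
  simp only [Set.mem_iUnion]
  constructor
  · intro h
    refine ⟨Nat.find h, Nat.find_spec h, fun t h1 h2 => ?_⟩
    intro hvis
    have : t - 1 < Nat.find h := by omega
    have := Nat.find_min h this
    apply this
    show aggClaims Y (t - 1 + 1) ω = u + (t - 1 + 1)
    have ht : t - 1 + 1 = t := by omega
    rw [ht]; exact hvis
  · rintro ⟨k, hk⟩
    exact ⟨k, hk.1⟩

lemma prob_union_vis (hY : ∀ i, Measurable (Y i)) (u : ℕ) :
    ℙ (⋃ k, Vis Y u (k + 1)) = ∑' k, ℙ (Fir Y u k) := by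
  rw [union_vis_eq_union_fir u, measure_iUnion (fir_disjoint u) (fir_measurable hY u)]

/-- the set of tuples describing a first visit -/
def FirSet (u k : ℕ) : Set (Fin (k + 1) → ℕ) :=
  {x | (∑ i, x i) = u + (k + 1) ∧ ∀ t, 1 ≤ t → t ≤ k →
    (∑ i ∈ Finset.range t, x ⟨i % (k + 1), Nat.mod_lt _ (Nat.succ_pos k)⟩) ≠ u + t}

/-- tuples summing to `d` -/
def SumSet (c d : ℕ) : Set (Fin d → ℕ) := {x | (∑ i, x i) = c}

lemma vis_eq_tev (u m : ℕ) :
    Vis Y u m = tev (Y := Y) (fun i : Fin m => (i : ℕ)) (SumSet (u + m) m) := by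
  ext ω
  simp only [Vis, tev, SumSet, Set.mem_setOf_eq, aggClaims]
  rw [Fin.sum_univ_eq_sum_range (fun i => Y i ω) m]

lemma fir_eq_tev (u k : ℕ) :
    Fir Y u k = tev (Y := Y) (fun i : Fin (k + 1) => (i : ℕ)) (FirSet u k) := by
  ext ω
  simp only [Fir, tev, FirSet, Set.mem_setOf_eq, aggClaims]
  rw [Fin.sum_univ_eq_sum_range (fun i => Y i ω) (k + 1)]
  constructor
  · rintro ⟨h1, h2⟩
    refine ⟨h1, fun t ht1 ht2 => ?_⟩
    have : (∑ i ∈ Finset.range t, Y (i % (k + 1)) ω) = ∑ i ∈ Finset.range t, Y i ω :=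
      Finset.sum_congr rfl fun i hi => by
        rw [Nat.mod_eq_of_lt (by have := Finset.mem_range.mp hi; omega)]
    rw [this]
    exact h2 t ht1 ht2
  · rintro ⟨h1, h2⟩
    refine ⟨h1, fun t ht1 ht2 => ?_⟩
    have h3 := h2 t ht1 ht2
    have : (∑ i ∈ Finset.range t, Y (i % (k + 1)) ω) = ∑ i ∈ Finset.range t, Y i ω :=
      Finset.sum_congr rfl fun i hi => by
        rw [Nat.mod_eq_of_lt (by have := Finset.mem_range.mp hi; omega)]
    rw [this] at h3
    exact h3

lemma blk_eq_tev (a d c : ℕ) :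
    {ω : Ω | (∑ j ∈ Finset.range d, Y (a + j) ω) = c}
      = tev (Y := Y) (fun j : Fin d => a + (j : ℕ)) (SumSet c d) := by
  ext ω
  simp only [tev, SumSet, Set.mem_setOf_eq]
  rw [Fin.sum_univ_eq_sum_range (fun j => Y (a + j) ω) d]

lemma blk_prob (hY : ∀ i, Measurable (Y i))
    (hindep : iIndepFun Y ℙ)
    (hid : ∀ i, IdentDistrib (Y i) (Y 0) ℙ ℙ) (a d : ℕ) :
    ℙ {ω : Ω | (∑ j ∈ Finset.range d, Y (a + j) ω) = d} = gE Y d := by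
  rw [blk_eq_tev a d d, tuple_prob_inv hY hindep hid _ (fun i : Fin d => (i : ℕ))
    (fun x y hxy => Fin.ext (by simpa using hxy)) (fun x y hxy => Fin.ext hxy) (SumSet d d)]
  rw [gE, vis_eq_tev 0 d]
  congr 1
  rw [Nat.zero_add]

lemma vis_decomp (hY : ∀ i, Measurable (Y i))
    (hindep : iIndepFun Y ℙ)
    (hid : ∀ i, IdentDistrib (Y i) (Y 0) ℙ ℙ) (u k : ℕ) :
    ℙ (Vis Y u (k + 1)) = ∑ t ∈ Finset.range (k + 1), ℙ (Fir Y u t) * gE Y (k - t) := by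
  classical
  have hdecomp : Vis Y u (k + 1) = ⋃ t ∈ Finset.range (k + 1), (Fir Y u t ∩ Vis Y u (k + 1)) := by
    ext ω
    simp only [Set.mem_iUnion, Set.mem_inter_iff, Finset.mem_range]
    constructor
    · intro h
      have hex : ∃ k', ω ∈ Vis Y u (k' + 1) := ⟨k, h⟩
      refine ⟨Nat.find hex, ?_, ⟨Nat.find_spec hex, fun t h1 h2 hvis => ?_⟩, h⟩
      · have : Nat.find hex ≤ k := Nat.find_min' hex h
        omega
      · have hlt : t - 1 < Nat.find hex := by omega
        apply Nat.find_min hex hlt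
        show aggClaims Y (t - 1 + 1) ω = u + (t - 1 + 1)
        have ht : t - 1 + 1 = t := by omega
        rw [ht]; exact hvis
    · rintro ⟨t, _, _, h⟩
      exact h
  rw [hdecomp, measure_biUnion_finset ?_ (fun t _ =>
    (fir_measurable hY u t).inter (vis_measurable hY u (k + 1)))]
  · refine Finset.sum_congr rfl fun t ht => ?_
    rw [Finset.mem_range] at ht
    have hblk : Fir Y u t ∩ Vis Y u (k + 1)
        = Fir Y u t ∩ {ω : Ω | (∑ j ∈ Finset.range (k - t), Y (t + 1 + j) ω) = k - t} := by
      ext ω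
      simp only [Fir, Vis, Set.mem_inter_iff, Set.mem_setOf_eq]
      constructor
      · rintro ⟨⟨h1, h2⟩, h3⟩
        refine ⟨⟨h1, h2⟩, ?_⟩
        have hsplit : aggClaims Y (k + 1) ω
            = aggClaims Y (t + 1) ω + ∑ j ∈ Finset.range (k - t), Y (t + 1 + j) ω := by
          have h4 : k + 1 = t + 1 + (k - t) := by omega
          simp only [aggClaims]
          rw [h4, Finset.sum_range_add]
        rw [hsplit, h1] at h3
        omega
      · rintro ⟨⟨h1, h2⟩, h3⟩
        refine ⟨⟨h1, h2⟩, ?_⟩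
        have hsplit : aggClaims Y (k + 1) ω
            = aggClaims Y (t + 1) ω + ∑ j ∈ Finset.range (k - t), Y (t + 1 + j) ω := by
          have h4 : k + 1 = t + 1 + (k - t) := by omega
          simp only [aggClaims]
          rw [h4, Finset.sum_range_add]
        rw [hsplit, h1, h3]
        omega
    rw [hblk, fir_eq_tev u t, blk_eq_tev (t + 1) (k - t) (k - t),
      split_prob hY hindep hid (t + 1) (k - t) (FirSet u t) (SumSet (k - t) (k - t)),
      ← blk_eq_tev (t + 1) (k - t) (k - t), ← fir_eq_tev u t,
      blk_prob hY hindep hid (t + 1) (k - t)]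
  · -- pairwise disjointness on the finset
    intro a ha b hb hab
    have := fir_disjoint (Y := Y) u hab
    rw [Function.onFun] at this
    exact (this.mono (Set.inter_subset_left) (Set.inter_subset_left)).mono le_rfl le_rfl

lemma vis_tsum_pair (hY : ∀ i, Measurable (Y i))
    (hindep : iIndepFun Y ℙ)
    (hid : ∀ i, IdentDistrib (Y i) (Y 0) ℙ ℙ) (u k : ℕ) :
    ℙ (Vis Y u (k + 1))
      = ∑' p : ℕ × ℕ, if p.1 + p.2 = k then ℙ (Fir Y u p.1) * gE Y p.2 else 0 := by
  classical
  have hinner : ∀ t, (∑' r, if t + r = k then ℙ (Fir Y u t) * gE Y r else 0)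
      = if t ≤ k then ℙ (Fir Y u t) * gE Y (k - t) else 0 := by
    intro t
    by_cases ht : t ≤ k
    · rw [if_pos ht, tsum_eq_single (k - t) (fun r hr => if_neg (by omega)), if_pos (by omega)]
    · rw [if_neg ht]
      exact ENNReal.tsum_eq_zero.mpr fun r => if_neg (by omega)
  calc ℙ (Vis Y u (k + 1))
      = ∑ t ∈ Finset.range (k + 1), ℙ (Fir Y u t) * gE Y (k - t) :=
        vis_decomp hY hindep hid u k
    _ = ∑ t ∈ Finset.range (k + 1), if t ≤ k then ℙ (Fir Y u t) * gE Y (k - t) else 0 :=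
        Finset.sum_congr rfl fun t ht =>
          (if_pos (by have := Finset.mem_range.mp ht; omega)).symm
    _ = ∑' t : ℕ, if t ≤ k then ℙ (Fir Y u t) * gE Y (k - t) else 0 :=
        (tsum_eq_sum (fun t ht => if_neg (by simp at ht; omega))).symm
    _ = ∑' (t : ℕ) (r : ℕ), if t + r = k then ℙ (Fir Y u t) * gE Y r else 0 :=
        (tsum_congr hinner).symm
    _ = ∑' p : ℕ × ℕ, if p.1 + p.2 = k then ℙ (Fir Y u p.1) * gE Y p.2 else 0 :=
        (ENNReal.tsum_prod
          (f := fun t r => if t + r = k then ℙ (Fir Y u t) * gE Y r else 0)).symm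

lemma tsum_vis (hY : ∀ i, Measurable (Y i))
    (hindep : iIndepFun Y ℙ)
    (hid : ∀ i, IdentDistrib (Y i) (Y 0) ℙ ℙ) (u : ℕ) :
    ∑' k, ℙ (Vis Y u (k + 1)) = (∑' k, ℙ (Fir Y u k)) * ∑' r, gE Y r := by
  classical
  calc ∑' k, ℙ (Vis Y u (k + 1))
      = ∑' (k : ℕ) (p : ℕ × ℕ), if p.1 + p.2 = k then ℙ (Fir Y u p.1) * gE Y p.2 else 0 :=
        tsum_congr (vis_tsum_pair hY hindep hid u)
    _ = ∑' (p : ℕ × ℕ) (k : ℕ), if p.1 + p.2 = k then ℙ (Fir Y u p.1) * gE Y p.2 else 0 :=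
        ENNReal.tsum_comm
    _ = ∑' p : ℕ × ℕ, ℙ (Fir Y u p.1) * gE Y p.2 :=
        tsum_congr fun p => by
          rw [tsum_eq_single (p.1 + p.2) (fun k hk => if_neg (by omega)), if_pos rfl]
    _ = ∑' (t : ℕ) (r : ℕ), ℙ (Fir Y u t) * gE Y r :=
        ENNReal.tsum_prod (f := fun t r => ℙ (Fir Y u t) * gE Y r)
    _ = (∑' k, ℙ (Fir Y u k)) * ∑' r, gE Y r := by
        simp_rw [ENNReal.tsum_mul_left, ENNReal.tsum_mul_right]

lemma gE_zero : gE Y 0 = 1 := by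
  have : Vis Y 0 0 = (Set.univ : Set Ω) := by
    ext ω
    simp [Vis, aggClaims]
  rw [gE, this, measure_univ]

lemma gE_bound (hY : ∀ i, Measurable (Y i))
    (hindep : iIndepFun Y ℙ)
    (hid : ∀ i, IdentDistrib (Y i) (Y 0) ℙ ℙ)
    (hF : (∑' k, ℙ (Fir Y 0 k)) < 1) :
    ∑' r, gE Y r ≤ (1 - ∑' k, ℙ (Fir Y 0 k))⁻¹ := by
  classical
  set c := ∑' k, ℙ (Fir Y 0 k) with hc_def
  set x := (1 - c)⁻¹ with hx_def
  have hc1 : c ≤ 1 := le_of_lt hF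
  have hsub_ne : 1 - c ≠ 0 := by
    intro h
    have := tsub_add_cancel_of_le hc1
    rw [h, zero_add] at this
    exact absurd this (ne_of_lt hF)
  have hsub_netop : (1 : ℝ≥0∞) - c ≠ ⊤ := by
    intro h
    have : (1 : ℝ≥0∞) - c ≤ 1 := tsub_le_self
    rw [h] at this
    exact absurd this (by simp)
  have hfix : 1 + c * x = x := by
    have h1 : (1 - c) * x = 1 := ENNReal.mul_inv_cancel hsub_ne hsub_netop
    calc 1 + c * x = (1 - c) * x + c * x := by rw [h1]
      _ = ((1 - c) + c) * x := (add_mul _ _ _).symm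
      _ = 1 * x := by rw [tsub_add_cancel_of_le hc1]
      _ = x := one_mul x
  have hstep : ∀ N : ℕ, (∑ r ∈ Finset.range N, gE Y r) ≤ x := by
    intro N
    induction N with
    | zero => simp
    | succ N ih =>
      have h0 : (∑ r ∈ Finset.range (N + 1), gE Y r)
          = (∑ k ∈ Finset.range N, gE Y (k + 1)) + gE Y 0 := Finset.sum_range_succ' _ N
      have h2 : (∑ k ∈ Finset.range N, gE Y (k + 1)) ≤ c * ∑ r ∈ Finset.range N, gE Y r := by
        have h3 : ∀ k, gE Y (k + 1)
            = ∑' p : ℕ × ℕ, if p.1 + p.2 = k then ℙ (Fir Y 0 p.1) * gE Y p.2 else 0 := by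
          intro k
          have := vis_tsum_pair hY hindep hid 0 k
          rw [← this]
          rfl
        calc (∑ k ∈ Finset.range N, gE Y (k + 1))
            = ∑ k ∈ Finset.range N,
              ∑' p : ℕ × ℕ, if p.1 + p.2 = k then ℙ (Fir Y 0 p.1) * gE Y p.2 else 0 :=
              Finset.sum_congr rfl fun k _ => h3 k
          _ = ∑' p : ℕ × ℕ,
              ∑ k ∈ Finset.range N, if p.1 + p.2 = k then ℙ (Fir Y 0 p.1) * gE Y p.2 else 0 :=
              (Summable.tsum_finsetSum (fun _ _ => ENNReal.summable)).symm
          _ = ∑' p : ℕ × ℕ,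
              if p.1 + p.2 ∈ Finset.range N then ℙ (Fir Y 0 p.1) * gE Y p.2 else 0 :=
              tsum_congr fun p => Finset.sum_ite_eq _ _ _
          _ ≤ ∑' p : ℕ × ℕ, if p.2 < N then ℙ (Fir Y 0 p.1) * gE Y p.2 else 0 := by
              refine Summable.tsum_le_tsum (fun p => ?_) ENNReal.summable ENNReal.summable
              by_cases hp : p.1 + p.2 ∈ Finset.range N
              · rw [if_pos hp, if_pos (by simp at hp; omega)]
              · rw [if_neg hp]
                exact zero_le
          _ = ∑' (t : ℕ) (r : ℕ), if r < N then ℙ (Fir Y 0 t) * gE Y r else 0 :=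
              ENNReal.tsum_prod (f := fun t r => if r < N then ℙ (Fir Y 0 t) * gE Y r else 0)
          _ = c * ∑ r ∈ Finset.range N, gE Y r := by
              have h4 : ∀ t : ℕ, (∑' r, if r < N then ℙ (Fir Y 0 t) * gE Y r else 0)
                  = ℙ (Fir Y 0 t) * ∑ r ∈ Finset.range N, gE Y r := by
                intro t
                calc (∑' r, if r < N then ℙ (Fir Y 0 t) * gE Y r else 0)
                    = ∑' r, ℙ (Fir Y 0 t) * (if r < N then gE Y r else 0) :=
                      tsum_congr fun r => by rw [mul_ite, mul_zero]
                  _ = ℙ (Fir Y 0 t) * ∑' r, (if r < N then gE Y r else 0) :=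
                      ENNReal.tsum_mul_left
                  _ = ℙ (Fir Y 0 t) * ∑ r ∈ Finset.range N, gE Y r := by
                      rw [tsum_eq_sum (s := Finset.range N)
                        (fun r hr => if_neg (by simpa using hr))]
                      exact congrArg _ (Finset.sum_congr rfl
                        fun r hr => if_pos (Finset.mem_range.mp hr))
              rw [tsum_congr h4, ENNReal.tsum_mul_right, ← hc_def]
      calc (∑ r ∈ Finset.range (N + 1), gE Y r)
          = (∑ k ∈ Finset.range N, gE Y (k + 1)) + gE Y 0 := h0
        _ ≤ c * (∑ r ∈ Finset.range N, gE Y r) + 1 :=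
            add_le_add h2 (le_of_eq gE_zero)
        _ ≤ c * x + 1 := add_le_add_left (mul_le_mul_right ih c) 1
        _ = 1 + c * x := add_comm _ _
        _ = x := hfix
  rw [ENNReal.tsum_eq_iSup_nat]
  exact iSup_le hstep

/-- survival up to horizon `n` -/
def SurvN (Y : ℕ → Ω → ℕ) (n : ℕ) : Set Ω :=
  {ω | ∀ t ∈ Finset.Icc 1 n, aggClaims Y t ω < t}

/-- the event that the rotated-by-`r` walk stays below the diagonal up to `n` -/
def GoodEv (Y : ℕ → Ω → ℕ) (n r : ℕ) : Set Ω :=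
  {ω | goodRot (fun i => Y i ω) n r}

/-- tuples whose partial sums stay below the diagonal -/
def RotSet (n : ℕ) : Set (Fin n → ℕ) :=
  {x | ∀ t ∈ Finset.Icc 1 n,
    (∑ i ∈ Finset.range t, if h : i < n then x ⟨i, h⟩ else 0) < t}

lemma tev_measurable (hY : ∀ i, Measurable (Y i)) {m : ℕ} (e : Fin m → ℕ)
    (E : Set (Fin m → ℕ)) : MeasurableSet (tev (Y := Y) e E) := by
  have hset : tev (Y := Y) e E
      = ⋃ x : E, {ω : Ω | ∀ i, Y (e i) ω = (x : Fin m → ℕ) i} := by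
    ext ω
    simp only [tev, Set.mem_setOf_eq, Set.mem_iUnion]
    constructor
    · intro h
      exact ⟨⟨_, h⟩, fun i => rfl⟩
    · rintro ⟨x, hx⟩
      have hfun : (fun i => Y (e i) ω) = (x : Fin m → ℕ) := funext fun i => hx i
      rw [hfun]; exact x.2
  rw [hset]
  exact MeasurableSet.iUnion fun x => atomSet_measurable hY e _

lemma goodEv_eq_tev {n : ℕ} (hn : 0 < n) (r : ℕ) :
    GoodEv Y n r = tev (Y := Y) (fun i : Fin n => (r + (i : ℕ)) % n) (RotSet n) := by
  ext ω
  simp only [GoodEv, goodRot, tev, RotSet, Set.mem_setOf_eq]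
  refine forall₂_congr fun t ht => ?_
  rw [Finset.mem_Icc] at ht
  have : (∑ i ∈ Finset.range t,
        if h : i < n then (fun i : Fin n => Y ((r + (i : ℕ)) % n) ω) ⟨i, h⟩ else 0)
      = ∑ i ∈ Finset.range t, Y ((r + i) % n) ω := by
    refine Finset.sum_congr rfl fun i hi => ?_
    rw [dif_pos (by have := Finset.mem_range.mp hi; omega)]
  rw [this]

lemma rot_inj {n : ℕ} (hn : 0 < n) (r : ℕ) :
    Function.Injective (fun i : Fin n => (r + (i : ℕ)) % n) := by
  intro a b hab
  simp only at hab
  have h1 : ((a : ℕ)) % n = ((b : ℕ)) % n := Nat.ModEq.add_left_cancel' r hab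
  rw [Nat.mod_eq_of_lt a.2, Nat.mod_eq_of_lt b.2] at h1
  exact Fin.ext h1

lemma goodEv_prob (hY : ∀ i, Measurable (Y i))
    (hindep : iIndepFun Y ℙ)
    (hid : ∀ i, IdentDistrib (Y i) (Y 0) ℙ ℙ) {n : ℕ} (hn : 0 < n) (r : ℕ) :
    ℙ (GoodEv Y n r) = ℙ (GoodEv Y n 0) := by
  rw [goodEv_eq_tev hn r, goodEv_eq_tev hn 0]
  exact tuple_prob_inv hY hindep hid _ _ (rot_inj hn r) (rot_inj hn 0) _

lemma goodEv_zero {n : ℕ} (hn : 0 < n) : GoodEv Y n 0 = SurvN Y n := by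
  ext ω
  simp only [GoodEv, goodRot, SurvN, Set.mem_setOf_eq, aggClaims]
  refine forall₂_congr fun t ht => ?_
  rw [Finset.mem_Icc] at ht
  have : (∑ i ∈ Finset.range t, Y ((0 + i) % n) ω) = ∑ i ∈ Finset.range t, Y i ω := by
    refine Finset.sum_congr rfl fun i hi => ?_
    rw [Nat.zero_add, Nat.mod_eq_of_lt (by have := Finset.mem_range.mp hi; omega)]
  rw [this]

lemma goodEv_measurable (hY : ∀ i, Measurable (Y i)) {n : ℕ} (hn : 0 < n) (r : ℕ) :
    MeasurableSet (GoodEv Y n r) := by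
  rw [goodEv_eq_tev hn r]
  exact tev_measurable hY _ _

lemma survN_measurable (hY : ∀ i, Measurable (Y i)) (n : ℕ) :
    MeasurableSet (SurvN Y n) := by
  have : SurvN Y n = ⋂ t ∈ Finset.Icc 1 n, {ω | aggClaims Y t ω < t} := by
    ext ω; simp [SurvN, Set.mem_iInter]
  rw [this]
  refine MeasurableSet.biInter (Finset.countable_toSet _) fun t _ => ?_
  exact aggClaims_measurable hY t measurableSet_Iio

lemma lintegral_survN (hY : ∀ i, Measurable (Y i))
    (hindep : iIndepFun Y ℙ)
    (hid : ∀ i, IdentDistrib (Y i) (Y 0) ℙ ℙ) {n : ℕ} (hn : 0 < n) :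
    (n : ℝ≥0∞) * ℙ (SurvN Y n)
      = ∫⁻ ω, ((n - aggClaims Y n ω : ℕ) : ℝ≥0∞) ∂ℙ := by
  classical
  have h1 : (n : ℝ≥0∞) * ℙ (SurvN Y n) = ∑ r ∈ Finset.range n, ℙ (GoodEv Y n r) := by
    rw [Finset.sum_congr rfl fun r _ => goodEv_prob hY hindep hid hn r]
    rw [Finset.sum_const, Finset.card_range, nsmul_eq_mul, goodEv_zero hn]
  rw [h1]
  have h2 : ∀ r ∈ Finset.range n, ℙ (GoodEv Y n r)
      = ∫⁻ ω, (GoodEv Y n r).indicator (1 : Ω → ℝ≥0∞) ω ∂ℙ := by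
    intro r _
    rw [lintegral_indicator_one (goodEv_measurable hY hn r)]
  rw [Finset.sum_congr rfl h2,
    ← lintegral_finset_sum (μ := ℙ) (Finset.range n)
      (f := fun r ω => (GoodEv Y n r).indicator (1 : Ω → ℝ≥0∞) ω)
      (fun r _ => measurable_const.indicator (goodEv_measurable hY hn r))]
  refine lintegral_congr fun ω => ?_
  have h3 : ∀ r, (GoodEv Y n r).indicator (1 : Ω → ℝ≥0∞) ω
      = if goodRot (fun i => Y i ω) n r then 1 else 0 := by
    intro r
    by_cases h : goodRot (fun i => Y i ω) n r <;>
      simp [Set.indicator_apply, GoodEv, h]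
  rw [Finset.sum_congr rfl fun r _ => h3 r]
  have h4 := cycle_count (y := fun i => Y i ω) (n := n) hn
  have h5 : (∑ r ∈ Finset.range n, if goodRot (fun i => Y i ω) n r then (1:ℝ≥0∞) else 0)
      = (((Finset.range n).filter (goodRot (fun i => Y i ω) n)).card : ℝ≥0∞) := by
    rw [Finset.card_filter]
    push_cast
    exact Finset.sum_congr rfl fun r _ => by
      by_cases h : goodRot (fun i => Y i ω) n r <;> simp [h]
  rw [h5, h4]
  rfl

lemma survN_toReal (hY : ∀ i, Measurable (Y i))
    (hindep : iIndepFun Y ℙ)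
    (hid : ∀ i, IdentDistrib (Y i) (Y 0) ℙ ℙ) {n : ℕ} (hn : 0 < n) :
    (ℙ (SurvN Y n)).toReal = ∫ ω, max (1 - (aggClaims Y n ω : ℝ) / n) 0 ∂ℙ := by
  have hmeasR : Measurable (fun ω => ((n - aggClaims Y n ω : ℕ) : ℝ)) :=
    (measurable_from_top (f := fun k : ℕ => ((n - k : ℕ) : ℝ))).comp (aggClaims_measurable hY n)
  have hintg : Integrable (fun ω => ((n - aggClaims Y n ω : ℕ) : ℝ)) ℙ := by
    refine (integrable_const ((n : ℝ))).mono' hmeasR.aestronglyMeasurable ?_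
    refine Filter.Eventually.of_forall fun ω => ?_
    rw [Real.norm_eq_abs, abs_of_nonneg (by positivity)]
    exact_mod_cast Nat.cast_le.mpr (Nat.sub_le n _)
  have hlint : ENNReal.ofReal (∫ ω, ((n - aggClaims Y n ω : ℕ) : ℝ) ∂ℙ)
      = ∫⁻ ω, ((n - aggClaims Y n ω : ℕ) : ℝ≥0∞) ∂ℙ := by
    rw [ofReal_integral_eq_lintegral_ofReal hintg
      (Filter.Eventually.of_forall fun ω => by positivity)]
    exact lintegral_congr fun ω => ENNReal.ofReal_natCast _
  have h5 := lintegral_survN hY hindep hid hn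
  rw [← hlint] at h5
  have h6 : (n : ℝ) * (ℙ (SurvN Y n)).toReal = ∫ ω, ((n - aggClaims Y n ω : ℕ) : ℝ) ∂ℙ := by
    have h6' := congrArg ENNReal.toReal h5
    rw [ENNReal.toReal_mul,
      ENNReal.toReal_ofReal (integral_nonneg fun ω => by positivity)] at h6'
    simpa using h6'
  have hn0 : (n : ℝ) ≠ 0 := by positivity
  have h7 : (ℙ (SurvN Y n)).toReal = ∫ ω, ((n - aggClaims Y n ω : ℕ) : ℝ) / n ∂ℙ := by
    rw [integral_div, ← h6]
    field_simp
  rw [h7]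
  refine integral_congr_ae (Filter.Eventually.of_forall fun ω => ?_)
  show ((n - aggClaims Y n ω : ℕ) : ℝ) / n = max (1 - (aggClaims Y n ω : ℝ) / n) 0
  rcases le_or_gt (aggClaims Y n ω) n with h | h
  · rw [Nat.cast_sub h, max_eq_left ?_]
    · field_simp
    · have : (aggClaims Y n ω : ℝ) / n ≤ 1 := by
        rw [div_le_one (by positivity)]
        exact_mod_cast h
      linarith
  · rw [Nat.sub_eq_zero_of_le (le_of_lt h), max_eq_right ?_]
    · simp
    · have : (1 : ℝ) ≤ (aggClaims Y n ω : ℝ) / n := by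
        rw [le_div_iff₀ (by positivity)]
        have : (n : ℝ) ≤ (aggClaims Y n ω : ℝ) := by exact_mod_cast le_of_lt h
        linarith
      linarith

lemma tendsto_surv_integral (hY : ∀ i, Measurable (Y i))
    (hindep : iIndepFun Y ℙ)
    (hid : ∀ i, IdentDistrib (Y i) (Y 0) ℙ ℙ)
    (hintY : Integrable (fun ω => (Y 0 ω : ℝ)) ℙ)
    (hμ1 : ∫ ω, (Y 0 ω : ℝ) ∂ℙ ≤ 1) :
    Tendsto (fun n : ℕ => ∫ ω, max (1 - (aggClaims Y n ω : ℝ) / n) 0 ∂ℙ) atTop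
      (𝓝 (1 - ∫ ω, (Y 0 ω : ℝ) ∂ℙ)) := by
  set μR := ∫ ω, (Y 0 ω : ℝ) ∂ℙ with hμR
  have hae : ∀ᵐ ω ∂ℙ,
      Tendsto (fun n : ℕ => (∑ i ∈ Finset.range n, (Y i ω : ℝ)) / n) atTop (𝓝 μR) :=
    strong_law_ae_real _ hintY
      (fun i j hij => ((hindep.indepFun hij).comp measurable_from_top measurable_from_top))
      (fun i => (hid i).comp measurable_from_top)
  have hconv : ∀ᵐ ω ∂ℙ,
      Tendsto (fun n : ℕ => max (1 - (aggClaims Y n ω : ℝ) / n) 0) atTop (𝓝 (1 - μR)) := by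
    filter_upwards [hae] with ω hω
    have hagg : (fun n : ℕ => (aggClaims Y n ω : ℝ) / n)
        = fun n : ℕ => (∑ i ∈ Finset.range n, (Y i ω : ℝ)) / n := by
      funext n
      rw [aggClaims]
      push_cast
      ring
    have h1 : Tendsto (fun n : ℕ => 1 - (aggClaims Y n ω : ℝ) / n) atTop (𝓝 (1 - μR)) :=
      tendsto_const_nhds.sub (hagg ▸ hω)
    have h3 : max (1 - μR) (0:ℝ) = 1 - μR := max_eq_left (by linarith)
    have h4 := h1.max (tendsto_const_nhds (x := (0:ℝ)))
    rw [h3] at h4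
    exact h4
  have hmeas : ∀ n : ℕ, AEStronglyMeasurable (fun ω => max (1 - (aggClaims Y n ω : ℝ) / n) 0) ℙ := by
    intro n
    exact ((measurable_const.sub ((measurable_from_top.comp
      (aggClaims_measurable hY n)).div_const _)).max measurable_const).aestronglyMeasurable
  have hbdd : ∀ n : ℕ, ∀ᵐ ω ∂ℙ, ‖max (1 - (aggClaims Y n ω : ℝ) / n) 0‖ ≤ (1 : ℝ) := by
    intro n
    refine Filter.Eventually.of_forall fun ω => ?_
    rw [Real.norm_eq_abs, abs_of_nonneg (le_max_right _ _)]
    refine max_le ?_ zero_le_one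
    have : (0:ℝ) ≤ (aggClaims Y n ω : ℝ) / n := by positivity
    linarith
  have := tendsto_integral_of_dominated_convergence (μ := ℙ)
    (F := fun n ω => max (1 - (aggClaims Y n ω : ℝ) / n) 0) (f := fun _ => 1 - μR)
    (bound := fun _ => (1 : ℝ)) hmeas (integrable_const 1) hbdd hconv
  simpa [integral_const, measure_univ] using this

/-- survival forever -/
def Surv (Y : ℕ → Ω → ℕ) : Set Ω := ⋂ n, SurvN Y n

lemma surv_prob (hY : ∀ i, Measurable (Y i))
    (hindep : iIndepFun Y ℙ)
    (hid : ∀ i, IdentDistrib (Y i) (Y 0) ℙ ℙ)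
    (hintY : Integrable (fun ω => (Y 0 ω : ℝ)) ℙ)
    (hμ1 : ∫ ω, (Y 0 ω : ℝ) ∂ℙ ≤ 1) :
    ℙ (Surv Y) = ENNReal.ofReal (1 - ∫ ω, (Y 0 ω : ℝ) ∂ℙ) := by
  have hmono : Antitone (fun n => SurvN Y n) := by
    intro a b hab ω hω t ht
    exact hω t (Finset.mem_Icc.mpr ⟨(Finset.mem_Icc.mp ht).1,
      le_trans (Finset.mem_Icc.mp ht).2 hab⟩)
  have htm := tendsto_measure_iInter_atTop (μ := ℙ)
    (fun n => (survN_measurable hY n).nullMeasurableSet) hmono ⟨0, measure_ne_top _ _⟩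
  have htr : Tendsto (fun n => (ℙ (SurvN Y n)).toReal) atTop (𝓝 (ℙ (Surv Y)).toReal) :=
    (ENNReal.tendsto_toReal (measure_ne_top _ _)).comp htm
  have heq : ∀ᶠ n in (atTop : Filter ℕ),
      (∫ ω, max (1 - (aggClaims Y n ω : ℝ) / n) 0 ∂ℙ) = (ℙ (SurvN Y n)).toReal :=
    eventually_atTop.mpr ⟨1, fun n hn => (survN_toReal hY hindep hid (by omega)).symm⟩
  have h2 : Tendsto (fun n => (ℙ (SurvN Y n)).toReal) atTop
      (𝓝 (1 - ∫ ω, (Y 0 ω : ℝ) ∂ℙ)) :=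
    Tendsto.congr' heq (tendsto_surv_integral hY hindep hid hintY hμ1)
  have h3 : (ℙ (Surv Y)).toReal = 1 - ∫ ω, (Y 0 ω : ℝ) ∂ℙ := tendsto_nhds_unique htr h2
  rw [← h3, ENNReal.ofReal_toReal (measure_ne_top _ _)]

/-- the ruin event -/
def Ru (Y : ℕ → Ω → ℕ) (u : ℕ) : Set Ω :=
  ⋃ k, {ω | ((u : ℤ)) + ((k : ℕ) + 1) ≤ (aggClaims Y (k + 1) ω : ℤ)}

lemma ru_zero_compl : Ru Y 0 = (Surv Y)ᶜ := by
  ext ω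
  simp only [Ru, Surv, SurvN, Set.mem_compl_iff, Set.mem_iUnion, Set.mem_iInter,
    Set.mem_setOf_eq, not_forall]
  constructor
  · rintro ⟨k, hk⟩
    refine ⟨k + 1, k + 1, Finset.mem_Icc.mpr ⟨by omega, le_refl _⟩, by push_cast at hk; omega⟩
  · rintro ⟨n, t, ht, hagg⟩
    rw [Finset.mem_Icc] at ht
    refine ⟨t - 1, ?_⟩
    have h1 : t - 1 + 1 = t := by omega
    rw [h1]
    push_cast
    omega

lemma surv_measurableSet (hY : ∀ i, Measurable (Y i)) : MeasurableSet (Surv Y) :=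
  MeasurableSet.iInter fun n => survN_measurable hY n

lemma ru_prob_eq_vis (hY : ∀ i, Measurable (Y i))
    (hindep : iIndepFun Y ℙ)
    (hid : ∀ i, IdentDistrib (Y i) (Y 0) ℙ ℙ)
    (hintY : Integrable (fun ω => (Y 0 ω : ℝ)) ℙ)
    (hμlt : ∫ ω, (Y 0 ω : ℝ) ∂ℙ < 1) (u : ℕ) :
    ℙ (Ru Y u) = ℙ (⋃ k, Vis Y u (k + 1)) := by
  classical
  set μR := ∫ ω, (Y 0 ω : ℝ) ∂ℙ with hμR
  have hsub : (⋃ k, Vis Y u (k + 1)) ⊆ Ru Y u := by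
    refine Set.iUnion_subset fun k => ?_
    refine Set.subset_iUnion_of_subset k ?_
    intro ω hω
    have : aggClaims Y (k + 1) ω = u + (k + 1) := hω
    simp only [Set.mem_setOf_eq]
    omega
  set N := {ω : Ω | ¬ Tendsto (fun n : ℕ => (∑ i ∈ Finset.range n, (Y i ω : ℝ)) / n)
    atTop (𝓝 μR)} with hN_def
  have hN : ℙ N = 0 := by
    have hae := strong_law_ae_real (fun i ω => (Y i ω : ℝ)) hintY
      (fun i j hij => ((hindep.indepFun hij).comp measurable_from_top measurable_from_top))
      (fun i => (hid i).comp measurable_from_top)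
    rw [ae_iff] at hae
    exact hae
  have hsub2 : Ru Y u ⊆ (⋃ k, Vis Y u (k + 1)) ∪ N := by
    intro ω hω
    by_cases hωN : ω ∈ N
    · exact Or.inr hωN
    refine Or.inl ?_
    have hT : Tendsto (fun n : ℕ => (∑ i ∈ Finset.range n, (Y i ω : ℝ)) / n) atTop (𝓝 μR) := by
      by_contra hc
      exact hωN hc
    obtain ⟨k, hk⟩ := Set.mem_iUnion.mp hω
    rw [Set.mem_setOf_eq] at hk
    have hev : ∀ᶠ (t : ℕ) in atTop,
        (∑ i ∈ Finset.range t, (Y i ω : ℝ)) / t < (1 + μR) / 2 :=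
      hT.eventually_lt_const (by linarith)
    obtain ⟨M, hM⟩ := eventually_atTop.mp hev
    have hMM : ∀ t, M + 1 ≤ t → (aggClaims Y t ω : ℤ) - t < (u : ℤ) := by
      intro t ht
      have h1 := hM t (by omega)
      have ht0 : (0 : ℝ) < t := by
        have : (1 : ℕ) ≤ t := by omega
        exact_mod_cast Nat.lt_of_lt_of_le Nat.zero_lt_one this
      rw [div_lt_iff₀ ht0] at h1
      have hS : (∑ i ∈ Finset.range t, (Y i ω : ℝ)) = ((aggClaims Y t ω : ℕ) : ℝ) := by
        rw [aggClaims]; push_cast; ring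
      rw [hS] at h1
      have h2 : ((aggClaims Y t ω : ℕ) : ℝ) < t := by nlinarith
      have h3 : aggClaims Y t ω < t := by exact_mod_cast h2
      omega
    have hstep : ∀ t, ((aggClaims Y t ω : ℤ) - t) - 1 ≤ (aggClaims Y (t + 1) ω : ℤ) - ((t : ℕ) + 1) := by
      intro t
      have h4 : aggClaims Y (t + 1) ω = aggClaims Y t ω + Y t ω := by
        rw [aggClaims, aggClaims, Finset.sum_range_succ]
      have h5 : (0 : ℤ) ≤ (Y t ω : ℤ) := by positivity
      push_cast [h4]
      omega
    obtain ⟨m', hm'1, hm'2⟩ := skipfree_exists_eq (fun t => (aggClaims Y t ω : ℤ) - t)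
      hstep (u : ℤ) (k + 1) (M + 1)
      (by show (u : ℤ) ≤ (aggClaims Y (k + 1) ω : ℤ) - ((k + 1 : ℕ) : ℤ); push_cast; push_cast at hk; omega)
      hMM
    refine Set.mem_iUnion.mpr ⟨m' - 1, ?_⟩
    show aggClaims Y (m' - 1 + 1) ω = u + (m' - 1 + 1)
    have hm1 : m' - 1 + 1 = m' := by omega
    rw [hm1]
    omega
  refine le_antisymm ?_ (measure_mono hsub)
  calc ℙ (Ru Y u) ≤ ℙ ((⋃ k, Vis Y u (k + 1)) ∪ N) := measure_mono hsub2
    _ ≤ ℙ (⋃ k, Vis Y u (k + 1)) + ℙ N := measure_union_le _ _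
    _ = ℙ (⋃ k, Vis Y u (k + 1)) := by rw [hN, add_zero]

lemma key (hY : ∀ i, Measurable (Y i))
    (hindep : iIndepFun Y ℙ)
    (hid : ∀ i, IdentDistrib (Y i) (Y 0) ℙ ℙ)
    (hintY : Integrable (fun ω => (Y 0 ω : ℝ)) ℙ)
    (hμlt : ∫ ω, (Y 0 ω : ℝ) ∂ℙ < 1) (u : ℕ) :
    (ℙ (Ru Y u)).toReal
      = (1 - ∫ ω, (Y 0 ω : ℝ) ∂ℙ)
        * ∑' k : ℕ, (ℙ {ω : Ω | aggClaims Y (k + 1) ω = u + 1 + k}).toReal := by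
  classical
  set μR := ∫ ω, (Y 0 ω : ℝ) ∂ℙ with hμR
  have hμ0 : 0 ≤ μR := integral_nonneg fun ω => by positivity
  have hμ1 : μR ≤ 1 := le_of_lt hμlt
  set β := ENNReal.ofReal (1 - μR) with hβ_def
  have hβpos : β ≠ 0 := by
    rw [hβ_def]
    exact (ENNReal.ofReal_pos.mpr (by linarith)).ne'
  have hβle1 : β ≤ 1 := by
    rw [hβ_def]
    exact ENNReal.ofReal_le_one.mpr (by linarith)
  have hSurv : ℙ (Surv Y) = β := surv_prob hY hindep hid hintY hμ1
  have hRu0 : ℙ (Ru Y 0) = 1 - β := by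
    rw [ru_zero_compl, prob_compl_eq_one_sub (surv_measurableSet hY), hSurv]
  have hF0 : (∑' k, ℙ (Fir Y 0 k)) = 1 - β := by
    rw [← prob_union_vis hY 0, ← ru_prob_eq_vis hY hindep hid hintY hμlt 0, hRu0]
  have hF0lt : (∑' k, ℙ (Fir Y 0 k)) < 1 := by
    rw [hF0]
    exact ENNReal.sub_lt_self ENNReal.one_ne_top one_ne_zero hβpos
  have hGle := gE_bound hY hindep hid hF0lt
  rw [hF0, ENNReal.sub_sub_cancel ENNReal.one_ne_top hβle1] at hGle
  have hGne : (∑' r, gE Y r) ≠ ⊤ :=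
    ne_top_of_le_ne_top (ENNReal.inv_ne_top.mpr hβpos) hGle
  have hGid : (∑' r, gE Y r) = 1 + (∑' k, ℙ (Fir Y 0 k)) * ∑' r, gE Y r := by
    calc (∑' r, gE Y r) = gE Y 0 + ∑' k, gE Y (k + 1) :=
          tsum_eq_zero_add' ENNReal.summable
      _ = 1 + ∑' k, ℙ (Vis Y 0 (k + 1)) := by rw [gE_zero]; rfl
      _ = 1 + (∑' k, ℙ (Fir Y 0 k)) * ∑' r, gE Y r := by
          rw [tsum_vis hY hindep hid 0]
  have hβReal : β.toReal = 1 - μR := ENNReal.toReal_ofReal (by linarith)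
  have hf0 : (∑' k, ℙ (Fir Y 0 k)).toReal = μR := by
    rw [hF0, ENNReal.toReal_sub_of_le hβle1 ENNReal.one_ne_top, ENNReal.toReal_one, hβReal]
    ring
  have hF0ne : (∑' k, ℙ (Fir Y 0 k)) ≠ ⊤ := ne_top_of_lt hF0lt
  have hg : (∑' r, gE Y r).toReal = 1 + μR * (∑' r, gE Y r).toReal := by
    conv_lhs => rw [hGid]
    rw [ENNReal.toReal_add ENNReal.one_ne_top (ENNReal.mul_ne_top hF0ne hGne),
      ENNReal.toReal_one, ENNReal.toReal_mul, hf0]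
  have hFu_eq : ℙ (Ru Y u) = ∑' k, ℙ (Fir Y u k) := by
    rw [ru_prob_eq_vis hY hindep hid hintY hμlt u, prob_union_vis hY u]
  have hmain : (∑' k, ℙ (Vis Y u (k + 1))) = (∑' k, ℙ (Fir Y u k)) * ∑' r, gE Y r :=
    tsum_vis hY hindep hid u
  have hsets : ∀ k, {ω : Ω | aggClaims Y (k + 1) ω = u + 1 + k} = Vis Y u (k + 1) := by
    intro k
    ext ω
    simp only [Vis, Set.mem_setOf_eq]
    omega
  have hFune : (∑' k, ℙ (Fir Y u k)) ≠ ⊤ := by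
    rw [← hFu_eq]
    exact measure_ne_top _ _
  have hsum : (∑' k : ℕ, (ℙ {ω : Ω | aggClaims Y (k + 1) ω = u + 1 + k}).toReal)
      = (∑' k, ℙ (Fir Y u k)).toReal * (∑' r, gE Y r).toReal := by
    calc (∑' k : ℕ, (ℙ {ω : Ω | aggClaims Y (k + 1) ω = u + 1 + k}).toReal)
        = ∑' k : ℕ, (ℙ (Vis Y u (k + 1))).toReal :=
          tsum_congr fun k => by rw [hsets k]
      _ = (∑' k, ℙ (Vis Y u (k + 1))).toReal :=
          (ENNReal.tsum_toReal_eq fun k => measure_ne_top _ _).symm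
      _ = ((∑' k, ℙ (Fir Y u k)) * ∑' r, gE Y r).toReal := by rw [hmain]
      _ = (∑' k, ℙ (Fir Y u k)).toReal * (∑' r, gE Y r).toReal := ENNReal.toReal_mul
  rw [hsum, hFu_eq]
  have hginv : (1 - μR) * (∑' r, gE Y r).toReal = 1 := by linarith
  calc (∑' k, ℙ (Fir Y u k)).toReal
      = (∑' k, ℙ (Fir Y u k)).toReal * ((1 - μR) * (∑' r, gE Y r).toReal) := by
        rw [hginv, mul_one]
    _ = (1 - μR) * ((∑' k, ℙ (Fir Y u k)).toReal * (∑' r, gE Y r).toReal) := by ring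

end Risk

end RuinAux

/-- Infinite-horizon classical ruin probability:
`P_u(T_0 < ∞) = (1 - μ) ∑_{j=u+1}^∞ p^{*(j-u)}_j` (with `j = u + 1 + k`). -/
theorem ruin_prob_infinite_horizon
    [IsProbabilityMeasure (ℙ : Measure Ω)]
    (Y : ℕ → Ω → ℕ) (hY : ∀ i, Measurable (Y i))
    (hindep : iIndepFun Y ℙ)
    (hid : ∀ i, IdentDistrib (Y i) (Y 0) ℙ ℙ)
    (hint : Integrable (fun ω => (Y 0 ω : ℝ)) ℙ)
    (hμ : ∫ ω, (Y 0 ω : ℝ) ∂ℙ < 1)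
    (u : ℕ) :
    (ℙ {ω | ruinTime Y (u : ℤ) ω ≠ ⊤}).toReal =
      (1 - ∫ ω, (Y 0 ω : ℝ) ∂ℙ) *
        ∑' k : ℕ, (ℙ {ω | aggClaims Y (k + 1) ω = u + 1 + k}).toReal := by
  classical
  have hruin : {ω | ruinTime Y (u : ℤ) ω ≠ ⊤} = RuinAux.Ru Y u := by
    ext ω
    simp only [Set.mem_setOf_eq, RuinAux.Ru, Set.mem_iUnion, ruinTime]
    constructor
    · intro h
      rcases Set.eq_empty_or_nonempty {t : ℕ | 1 ≤ t ∧ riskProc Y (u : ℤ) t ω ≤ 0} with hc | hne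
      · exact absurd (by rw [hc, Set.image_empty, sInf_empty]) h
      · obtain ⟨t, ht1, ht2⟩ := hne
        refine ⟨t - 1, ?_⟩
        simp only [riskProc] at ht2
        have h1 : t - 1 + 1 = t := by omega
        rw [h1]
        push_cast
        omega
    · rintro ⟨k, hk⟩
      intro htop
      have hmem : ((k + 1 : ℕ) : ℕ∞)
          ∈ (fun t : ℕ => (t : ℕ∞)) '' {t : ℕ | 1 ≤ t ∧ riskProc Y (u : ℤ) t ω ≤ 0} :=
        Set.mem_image_of_mem _ ⟨by omega, by simp only [riskProc]; push_cast at hk ⊢; omega⟩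
      have hle := sInf_le hmem
      rw [htop, top_le_iff] at hle
      exact WithTop.natCast_ne_top _ hle
  rw [hruin]
  exact RuinAux.key hY hindep hid hint hμ u

end
end

section
/- For the dual walk Ŕ_n = S_n − n with i.i.d. ℕ-valued increments of mean μ < 1 and p_0 = P(Y = 0) > 0, the probability that a strict ascending ladder epoch never occurs equals 1 − P(L̂_1 < ∞) = (1 − μ)/p_0. -/
open MeasureTheory ProbabilityTheory Filter
open scoped ENNReal
open scoped Topology

set_option linter.unusedSectionVars false
set_option linter.unusedTactic false
set_option maxHeartbeats 1000000

noncomputable section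

variable {Ω : Type*} [MeasureSpace Ω]

/-- Dual walk `Ŕ_n = S_n - n`. -/
def dualWalk (Y : ℕ → Ω → ℕ) (n : ℕ) (ω : Ω) : ℤ := (aggClaims Y n ω : ℤ) - n

/-- First strict ascending ladder epoch `L̂_1 = inf {n ≥ 1 : Ŕ_n > 0}`. -/
def ladderEpoch (Y : ℕ → Ω → ℕ) (ω : Ω) : ℕ∞ :=
  sInf ((fun n : ℕ => (n : ℕ∞)) '' {n : ℕ | 1 ≤ n ∧ 0 < dualWalk Y n ω})

/-! ### Auxiliary definitions -/

/-- The walk `W_n = n - S_n`, negative of the dual walk. -/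
def negWalk (Y : ℕ → Ω → ℕ) (n : ℕ) (ω : Ω) : ℤ := (n : ℤ) - aggClaims Y n ω

/-- Running maximum of `negWalk` over `0 ≤ j ≤ n`. -/
def runMax (Y : ℕ → Ω → ℕ) : ℕ → Ω → ℤ
  | 0 => fun _ => 0
  | (n+1) => fun ω => max (runMax Y n ω) (negWalk Y (n+1) ω)

section Aux

variable (Y : ℕ → Ω → ℕ)

lemma aggClaims_succ (n : ℕ) (ω : Ω) :
    aggClaims Y (n+1) ω = aggClaims Y n ω + Y n ω := Finset.sum_range_succ _ _

lemma negWalk_zero (ω : Ω) : negWalk Y 0 ω = 0 := by simp [negWalk, aggClaims]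

lemma negWalk_succ (n : ℕ) (ω : Ω) :
    negWalk Y (n+1) ω = negWalk Y n ω + 1 - Y n ω := by
  simp [negWalk, aggClaims_succ]; push_cast; ring

lemma measurable_aggClaims (hY : ∀ i, Measurable (Y i)) (n : ℕ) :
    Measurable (fun ω => aggClaims Y n ω) := by
  unfold aggClaims
  exact Finset.measurable_sum _ (fun i _ => hY i)

lemma measurable_negWalk (hY : ∀ i, Measurable (Y i)) (n : ℕ) :
    Measurable (fun ω => negWalk Y n ω) := by
  unfold negWalk
  exact Measurable.sub measurable_const
    (measurable_from_top.comp (measurable_aggClaims Y hY n))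

lemma measurable_runMax (hY : ∀ i, Measurable (Y i)) (n : ℕ) :
    Measurable (fun ω => runMax Y n ω) := by
  induction n with
  | zero => exact measurable_const
  | succ n ih => exact Measurable.max ih (measurable_negWalk Y hY (n+1))

lemma negWalk_le_runMax {j n : ℕ} (h : j ≤ n) (ω : Ω) :
    negWalk Y j ω ≤ runMax Y n ω := by
  induction n with
  | zero =>
    interval_cases j
    simp [negWalk_zero, runMax]
  | succ n ih =>
    rcases Nat.lt_or_ge j (n+1) with hj | hj
    · exact le_trans (ih (Nat.lt_succ_iff.mp hj)) (le_max_left _ _)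
    · have : j = n+1 := le_antisymm h hj
      subst this
      exact le_max_right _ _

lemma runMax_nonneg (n : ℕ) (ω : Ω) : 0 ≤ runMax Y n ω := by
  have := negWalk_le_runMax Y (Nat.zero_le n) ω
  rwa [negWalk_zero] at this

lemma negWalk_le_self (n : ℕ) (ω : Ω) : negWalk Y n ω ≤ n := by
  unfold negWalk
  have : (0:ℤ) ≤ aggClaims Y n ω := Int.natCast_nonneg _
  omega

lemma runMax_le (n : ℕ) (ω : Ω) : runMax Y n ω ≤ n := by
  induction n with
  | zero => simp [runMax]
  | succ n ih =>
    refine max_le (le_trans ih (by exact_mod_cast Nat.le_succ n)) ?_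
    exact negWalk_le_self Y (n+1) ω

/-- The step dichotomy : the running max increases by 1 exactly when the walk is at a weak
maximum and the next claim is zero; otherwise it stays. -/
lemma runMax_succ_eq (n : ℕ) (ω : Ω) :
    runMax Y (n+1) ω =
      runMax Y n ω + (if negWalk Y n ω = runMax Y n ω ∧ Y n ω = 0 then 1 else 0) := by
  have hstep : negWalk Y (n+1) ω = negWalk Y n ω + 1 - Y n ω := negWalk_succ Y n ω
  have hle : negWalk Y n ω ≤ runMax Y n ω := negWalk_le_runMax Y (le_refl n) ω
  have hmax : runMax Y (n+1) ω = max (runMax Y n ω) (negWalk Y (n+1) ω) := rfl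
  by_cases h : negWalk Y n ω = runMax Y n ω ∧ Y n ω = 0
  · rw [if_pos h, hmax]
    obtain ⟨h1, h2⟩ := h
    rw [hstep, h1, h2]
    push_cast
    omega
  · rw [if_neg h, hmax]
    have hY0 : (0:ℤ) ≤ Y n ω := Int.natCast_nonneg _
    have : negWalk Y (n+1) ω ≤ runMax Y n ω := by
      rcases Nat.eq_zero_or_pos (Y n ω) with h0 | h0
      · have h1 : ¬ (negWalk Y n ω = runMax Y n ω) := fun hh => h ⟨hh, h0⟩
        have : negWalk Y n ω < runMax Y n ω := lt_of_le_of_ne hle h1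
        rw [hstep, h0]
        omega
      · have : (1:ℤ) ≤ Y n ω := by exact_mod_cast h0
        rw [hstep]
        omega
    omega

/-- Characterization of weak maximum epochs. -/
lemma runMax_le_iff (n : ℕ) (ω : Ω) (c : ℤ) :
    runMax Y n ω ≤ c ↔ ∀ j ≤ n, negWalk Y j ω ≤ c := by
  constructor
  · intro h j hj
    exact le_trans (negWalk_le_runMax Y hj ω) h
  · intro h
    induction n with
    | zero =>
      have := h 0 (le_refl 0)
      rw [negWalk_zero] at this
      simpa [runMax] using this
    | succ n ih =>
      refine max_le (ih (fun j hj => h j (le_trans hj (Nat.le_succ n)))) (h (n+1) (le_refl _))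

/-- Characterization of weak maximum epochs. -/
lemma negWalk_eq_runMax_iff (n : ℕ) (ω : Ω) :
    negWalk Y n ω = runMax Y n ω ↔ ∀ j < n, negWalk Y j ω ≤ negWalk Y n ω := by
  constructor
  · intro h j hj
    rw [h]
    exact negWalk_le_runMax Y (le_of_lt hj) ω
  · intro h
    refine le_antisymm (negWalk_le_runMax Y (le_refl n) ω) ?_
    rw [runMax_le_iff]
    intro j hj
    rcases Nat.lt_or_ge j n with hj' | hj'
    · exact h j hj'
    · have : j = n := le_antisymm hj hj'
      subst this
      exact le_refl _

end Aux

section Prob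

variable [IsProbabilityMeasure (ℙ : Measure Ω)]
variable (Y : ℕ → Ω → ℕ)

/-- Every subset of a countable pi type over `ℕ` is measurable. -/
lemma measurableSet_of_countable' {ι : Type*} [Finite ι] (s : Set (ι → ℕ)) :
    MeasurableSet s :=
  (Set.to_countable s).measurableSet

/-- Probability of a vector event for an injectively reindexed iid family, as a sum of
atom probabilities.  The key point is that the value only depends on the event `B`, not
on the injection `c`. -/
lemma prob_vector_event (hY : ∀ i, Measurable (Y i))
    (hindep : iIndepFun Y ℙ)
    (hid : ∀ i, IdentDistrib (Y i) (Y 0) ℙ ℙ)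
    {n : ℕ} (c : Fin n → ℕ) (hc : Function.Injective c) (B : Set (Fin n → ℕ)) :
    ℙ {ω | (fun i => Y (c i) ω) ∈ B} =
      ∑' y : B, ∏ i : Fin n, ℙ (Y 0 ⁻¹' {(y : Fin n → ℕ) i}) := by
  classical
  set V : Ω → (Fin n → ℕ) := fun ω i => Y (c i) ω with hV
  have hatom_meas : ∀ y : Fin n → ℕ, MeasurableSet {ω | V ω = y} := by
    intro y
    have : {ω | V ω = y} = ⋂ i : Fin n, Y (c i) ⁻¹' {y i} := by
      ext ω
      simp [hV, funext_iff, Set.mem_iInter]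
    rw [this]
    exact MeasurableSet.iInter fun i => (hY (c i)) (MeasurableSet.singleton _)
  have hdecomp : {ω | V ω ∈ B} = ⋃ y : B, {ω | V ω = (y : Fin n → ℕ)} := by
    ext ω
    simp only [Set.mem_setOf_eq, Set.mem_iUnion]
    exact ⟨fun h => ⟨⟨V ω, h⟩, rfl⟩, fun ⟨y, hy⟩ => hy ▸ y.2⟩
  have hdisj : Pairwise (Function.onFun Disjoint
      (fun y : B => {ω | V ω = (y : Fin n → ℕ)})) := by
    intro y y' hyy'
    refine Set.disjoint_left.mpr fun ω h1 h2 => hyy' ?_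
    exact Subtype.ext (h1 ▸ h2 ▸ rfl)
  rw [hdecomp, measure_iUnion hdisj (fun y => hatom_meas _)]
  congr 1
  funext y
  -- atom probability
  set sets : ℕ → Set ℕ :=
    Function.extend c (fun i => ({(y : Fin n → ℕ) i} : Set ℕ)) (fun _ => Set.univ) with hsets
  have hsetsc : ∀ i : Fin n, sets (c i) = {(y : Fin n → ℕ) i} := fun i => hc.extend_apply _ _ _
  have h1 : {ω | V ω = (y : Fin n → ℕ)} =
      ⋂ j ∈ Finset.image c Finset.univ, Y j ⁻¹' sets j := by
    ext ω
    simp only [Set.mem_setOf_eq, Set.mem_iInter, Finset.mem_image, Finset.mem_univ, true_and,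
      funext_iff]
    constructor
    · rintro h j ⟨i, rfl⟩
      rw [hsetsc i]
      exact h i
    · intro h i
      have := h (c i) ⟨i, rfl⟩
      rwa [hsetsc i] at this
  rw [h1, hindep.measure_inter_preimage_eq_mul _
    (fun j _ => MeasurableSet.of_discrete),
    Finset.prod_image (fun i _ j _ h => hc h)]
  refine Finset.prod_congr rfl fun i _ => ?_
  rw [hsetsc i]
  exact (hid (c i)).measure_mem_eq (MeasurableSet.singleton _)

/-- Reversed partial sums are sums over a final segment. -/
lemma sum_rev_eq_sum_Ico (g : ℕ → ℕ) {n k : ℕ} (hk : k ≤ n) :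
    ∑ i ∈ Finset.range k, g (n - 1 - i) = ∑ j ∈ Finset.Ico (n - k) n, g j := by
  refine Finset.sum_nbij' (fun i => n - 1 - i) (fun j => n - 1 - j) ?_ ?_ ?_ ?_ ?_ <;>
    intro a ha <;> simp only [Finset.mem_range, Finset.mem_Ico] at * <;> omega

/-- **Duality**: the probability that the walk stays at or below zero up to time `n` equals
the probability that time `n` is a weak maximum epoch of the negated walk. -/
lemma prob_ladder_eq_prob_max (hY : ∀ i, Measurable (Y i))
    (hindep : iIndepFun Y ℙ)
    (hid : ∀ i, IdentDistrib (Y i) (Y 0) ℙ ℙ) (n : ℕ) :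
    ℙ {ω | ∀ k, 1 ≤ k → k ≤ n → aggClaims Y k ω ≤ k}
      = ℙ {ω | negWalk Y n ω = runMax Y n ω} := by
  classical
  set B : Set (Fin n → ℕ) :=
    {y | ∀ k, 1 ≤ k → k ≤ n →
      (∑ i ∈ Finset.range k, if h : i < n then y ⟨i, h⟩ else 0) ≤ k} with hB
  have h1 : {ω | ∀ k, 1 ≤ k → k ≤ n → aggClaims Y k ω ≤ k}
      = {ω | (fun i : Fin n => Y ((i : ℕ)) ω) ∈ B} := by
    ext ω
    simp only [Set.mem_setOf_eq, hB]
    refine forall_congr' fun k => ?_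
    constructor
    · intro h hk1 hkn
      have hsum : (∑ i ∈ Finset.range k, if h : i < n then Y i ω else 0)
          = aggClaims Y k ω := by
        unfold aggClaims
        refine Finset.sum_congr rfl fun i hi => ?_
        rw [Finset.mem_range] at hi
        rw [dif_pos (by omega)]
      rw [hsum]
      exact h hk1 hkn
    · intro h hk1 hkn
      have hsum : (∑ i ∈ Finset.range k, if h : i < n then Y i ω else 0)
          = aggClaims Y k ω := by
        unfold aggClaims
        refine Finset.sum_congr rfl fun i hi => ?_
        rw [Finset.mem_range] at hi
        rw [dif_pos (by omega)]
      have := h hk1 hkn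
      rwa [hsum] at this
  have h2 : {ω | negWalk Y n ω = runMax Y n ω}
      = {ω | (fun i : Fin n => Y (n - 1 - (i : ℕ)) ω) ∈ B} := by
    ext ω
    simp only [Set.mem_setOf_eq, hB]
    rw [negWalk_eq_runMax_iff]
    have hsum : ∀ k ≤ n, (∑ i ∈ Finset.range k, if h : i < n then Y (n - 1 - i) ω else 0)
        = ∑ j ∈ Finset.Ico (n - k) n, Y j ω := by
      intro k hk
      rw [← sum_rev_eq_sum_Ico (fun j => Y j ω) hk]
      refine Finset.sum_congr rfl fun i hi => ?_
      rw [Finset.mem_range] at hi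
      rw [dif_pos (by omega)]
    have hsplit : ∀ m ≤ n, aggClaims Y m ω + ∑ j ∈ Finset.Ico m n, Y j ω
        = aggClaims Y n ω := by
      intro m hm
      exact Finset.sum_range_add_sum_Ico _ hm
    constructor
    · intro h k hk1 hkn
      have hj := h (n - k) (by omega)
      have hsp := hsplit (n - k) (by omega)
      have hnk : n - (n - k) = k := by omega
      rw [hsum k hkn]
      unfold negWalk at hj
      have hsp' := hsp
      omega
    · intro h j hj
      have hk := h (n - j) (by omega) (by omega)
      rw [hsum _ (by omega)] at hk
      have hsp := hsplit j (by omega)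
      have hnj : n - (n - j) = j := by omega
      rw [hnj] at hk
      unfold negWalk
      omega
  have hinj1 : Function.Injective (fun i : Fin n => (i : ℕ)) := Fin.val_injective
  have hinj2 : Function.Injective (fun i : Fin n => n - 1 - (i : ℕ)) := by
    intro i j hij
    simp only at hij
    have hi := i.isLt
    have hj := j.isLt
    exact Fin.ext (by omega)
  rw [h1, h2, prob_vector_event Y hY hindep hid _ hinj1 B,
    prob_vector_event Y hY hindep hid _ hinj2 B]

/-- **Independence**: the weak-maximum event at time `n` is independent of `Y n`. -/
lemma prob_max_inter_zero (hY : ∀ i, Measurable (Y i))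
    (hindep : iIndepFun Y ℙ)
    (hid : ∀ i, IdentDistrib (Y i) (Y 0) ℙ ℙ) (n : ℕ) :
    ℙ ({ω | negWalk Y n ω = runMax Y n ω} ∩ {ω | Y n ω = 0})
      = ℙ {ω | negWalk Y n ω = runMax Y n ω} * ℙ {ω | Y 0 ω = 0} := by
  classical
  have hIF := hindep.indepFun_finset (Finset.range n) {n}
    (by simp only [Finset.disjoint_left, Finset.mem_range, Finset.mem_singleton]; omega) hY
  set σ : ℕ → ((i : (Finset.range n : Finset ℕ)) → ℕ) → ℕ :=
    fun j v => ∑ i ∈ (Finset.range n).attach, if ((i : ℕ) < j) then v i else 0 with hσ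
  set B₁ : Set ((i : (Finset.range n : Finset ℕ)) → ℕ) :=
    {v | ∀ j < n, ((j : ℤ) - σ j v) ≤ ((n : ℤ) - σ n v)} with hB₁
  set B₂ : Set ((i : ({n} : Finset ℕ)) → ℕ) :=
    {v | v ⟨n, Finset.mem_singleton_self n⟩ = 0} with hB₂
  have key : ∀ (ω : Ω) (j : ℕ), j ≤ n →
      σ j (fun i => Y (i : ℕ) ω) = aggClaims Y j ω := by
    intro ω j hj
    rw [hσ]
    simp only
    rw [Finset.sum_attach (Finset.range n) (fun x => if x < j then Y x ω else 0),
      ← Finset.sum_filter]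
    have : (Finset.range n).filter (fun x => x < j) = Finset.range j := by
      ext a
      simp only [Finset.mem_filter, Finset.mem_range]
      omega
    rw [this]
    rfl
  have hA : {ω | negWalk Y n ω = runMax Y n ω}
      = (fun ω (i : (Finset.range n : Finset ℕ)) => Y (i : ℕ) ω) ⁻¹' B₁ := by
    ext ω
    rw [Set.mem_preimage, Set.mem_setOf_eq, negWalk_eq_runMax_iff, hB₁, Set.mem_setOf_eq]
    refine forall_congr' fun j => ?_
    refine imp_congr_right fun hj => ?_
    rw [key ω j (le_of_lt hj), key ω n (le_refl n)]
    unfold negWalk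
    rfl
  have hZ : {ω | Y n ω = 0}
      = (fun ω (i : ({n} : Finset ℕ)) => Y (i : ℕ) ω) ⁻¹' B₂ := by
    ext ω
    simp [hB₂]
  rw [hA, hZ, hIF.measure_inter_preimage_eq_mul _ _ (measurableSet_of_countable' _)
    (measurableSet_of_countable' _)]
  congr 1
  rw [← hZ]
  have : {ω | Y n ω = 0} = Y n ⁻¹' {0} := rfl
  rw [this]
  have := (hid n).measure_mem_eq (MeasurableSet.singleton 0)
  rw [this]
  rfl

lemma measurableSet_maxEvent (hY : ∀ i, Measurable (Y i)) (n : ℕ) :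
    MeasurableSet {ω | negWalk Y n ω = runMax Y n ω} :=
  measurableSet_eq_fun (measurable_negWalk Y hY n) (measurable_runMax Y hY n)

lemma integrable_runMax (hY : ∀ i, Measurable (Y i)) (n : ℕ) :
    Integrable (fun ω => ((runMax Y n ω : ℤ) : ℝ)) ℙ := by
  refine ⟨(measurable_from_top.comp (measurable_runMax Y hY n)).aestronglyMeasurable, ?_⟩
  refine HasFiniteIntegral.of_bounded (C := n) (ae_of_all _ fun ω => ?_)
  rw [Real.norm_eq_abs, abs_of_nonneg (by exact_mod_cast runMax_nonneg Y n ω)]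
  exact_mod_cast runMax_le Y n ω

lemma integral_runMax (hY : ∀ i, Measurable (Y i)) (N : ℕ) :
    ∫ ω, ((runMax Y N ω : ℤ) : ℝ) ∂ℙ
      = ∑ n ∈ Finset.range N,
          (ℙ ({ω | negWalk Y n ω = runMax Y n ω} ∩ {ω | Y n ω = 0})).toReal := by
  classical
  induction N with
  | zero => simp [runMax]
  | succ N ih =>
    set E : Set Ω := {ω | negWalk Y N ω = runMax Y N ω} ∩ {ω | Y N ω = 0} with hE
    have hEmeas : MeasurableSet E :=
      (measurableSet_maxEvent Y hY N).inter ((hY N) (MeasurableSet.singleton 0))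
    have hsplit : (fun ω => ((runMax Y (N+1) ω : ℤ) : ℝ))
        = fun ω => ((runMax Y N ω : ℤ) : ℝ) + E.indicator (fun _ => (1 : ℝ)) ω := by
      funext ω
      rw [runMax_succ_eq, Set.indicator_apply]
      by_cases h : negWalk Y N ω = runMax Y N ω ∧ Y N ω = 0
      · rw [if_pos h, if_pos (by exact h)]
        push_cast
        ring
      · rw [if_neg h, if_neg (by exact h)]
        push_cast
        ring
    rw [hsplit, integral_add (integrable_runMax Y hY N)
      ((integrable_const (1 : ℝ)).indicator hEmeas), ih,
      integral_indicator_const (1 : ℝ) hEmeas, Finset.sum_range_succ]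
    simp [smul_eq_mul]
    rfl

lemma exists_runMax_eq (n : ℕ) (ω : Ω) :
    ∃ j ≤ n, runMax Y n ω = negWalk Y j ω := by
  induction n with
  | zero => exact ⟨0, le_refl 0, (negWalk_zero Y ω).symm⟩
  | succ n ih =>
    obtain ⟨j, hj, hje⟩ := ih
    rcases max_cases (runMax Y n ω) (negWalk Y (n+1) ω) with ⟨h1, h2⟩ | ⟨h1, h2⟩
    · exact ⟨j, le_trans hj (Nat.le_succ n), by rw [← hje]; exact h1⟩
    · exact ⟨n+1, le_refl _, h1⟩

lemma slln (hY : ∀ i, Measurable (Y i))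
    (hindep : iIndepFun Y ℙ)
    (hid : ∀ i, IdentDistrib (Y i) (Y 0) ℙ ℙ)
    (hint : Integrable (fun ω => (Y 0 ω : ℝ)) ℙ) :
    ∀ᵐ ω ∂ℙ, Tendsto (fun n : ℕ => (aggClaims Y n ω : ℝ) / n) atTop
      (𝓝 (∫ ω, (Y 0 ω : ℝ) ∂ℙ)) := by
  have hpair : Pairwise (Function.onFun (IndepFun · · ℙ) (fun i ω => (Y i ω : ℝ))) := by
    intro i j hij
    exact (hindep.indepFun hij).comp measurable_from_top measurable_from_top
  have hident : ∀ i, IdentDistrib (fun ω => (Y i ω : ℝ)) (fun ω => (Y 0 ω : ℝ)) ℙ ℙ :=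
    fun i => (hid i).comp measurable_from_top
  filter_upwards [strong_law_ae_real (fun i ω => (Y i ω : ℝ)) hint hpair hident] with ω hω
  convert hω using 2 with n
  unfold aggClaims
  push_cast
  rfl

lemma tendsto_runMax_div (ω : Ω) {m : ℝ} (hm : m < 1)
    (hS : Tendsto (fun n : ℕ => (aggClaims Y n ω : ℝ) / n) atTop (𝓝 m)) :
    Tendsto (fun N : ℕ => ((runMax Y N ω : ℤ) : ℝ) / N) atTop (𝓝 (1 - m)) := by
  set d : ℝ := 1 - m with hd
  have hd0 : 0 < d := by rw [hd]; linarith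
  have hW : Tendsto (fun n : ℕ => ((negWalk Y n ω : ℤ) : ℝ) / n) atTop (𝓝 d) := by
    refine (tendsto_const_nhds.sub hS).congr' ?_
    filter_upwards [eventually_ge_atTop 1] with n hn
    have hn' : (n : ℝ) ≠ 0 := by positivity
    unfold negWalk
    push_cast
    field_simp
  rw [Metric.tendsto_atTop] at hW ⊢
  intro ε hε
  obtain ⟨J, hJ⟩ := hW (ε/2) (by positivity)
  set C : ℝ := ∑ j ∈ Finset.range (J+1), |((negWalk Y j ω : ℤ) : ℝ)| with hC
  have hC0 : 0 ≤ C := Finset.sum_nonneg fun j _ => abs_nonneg _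
  have hCj : ∀ j ≤ J, ((negWalk Y j ω : ℤ) : ℝ) ≤ C := by
    intro j hj
    refine le_trans (le_abs_self _) ?_
    exact Finset.single_le_sum (f := fun j => |((negWalk Y j ω : ℤ) : ℝ)|)
      (fun i _ => abs_nonneg _) (Finset.mem_range.mpr (by omega))
  have hupper : ∀ N : ℕ, ((runMax Y N ω : ℤ) : ℝ) ≤ C + (d + ε/2) * N := by
    intro N
    obtain ⟨j, hjN, hjeq⟩ := exists_runMax_eq Y N ω
    rw [hjeq]
    have hfac : (0:ℝ) ≤ (d + ε/2) := by linarith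
    have hjN' : (j:ℝ) ≤ N := by exact_mod_cast hjN
    rcases le_or_gt j J with h | h
    · have := hCj j h
      nlinarith
    · have hdist := hJ j (le_of_lt h)
      rw [Real.dist_eq, abs_lt] at hdist
      have hj0 : (0:ℝ) < j := by
        have : 1 ≤ j := by omega
        exact_mod_cast this
      have h2 : ((negWalk Y j ω : ℤ) : ℝ) / j < d + ε/2 := by linarith [hdist.2]
      rw [div_lt_iff₀ hj0] at h2
      nlinarith
  obtain ⟨N₁, hN₁⟩ := exists_nat_gt (2 * C / ε)
  refine ⟨max (max J 1) N₁, fun N hN => ?_⟩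
  have hNJ : J ≤ N := le_trans (le_trans (le_max_left _ _) (le_max_left _ _)) hN
  have hN1 : 1 ≤ N := le_trans (le_trans (le_max_right J 1) (le_max_left _ _)) hN
  have hNN₁ : N₁ ≤ N := le_trans (le_max_right _ _) hN
  have hN0 : (0:ℝ) < N := by exact_mod_cast hN1
  have hCN : C / N < ε / 2 := by
    rw [div_lt_iff₀ hN0]
    have h1 : 2 * C / ε < N := lt_of_lt_of_le hN₁ (by exact_mod_cast hNN₁)
    rw [div_lt_iff₀ hε] at h1
    linarith
  have hup : ((runMax Y N ω : ℤ) : ℝ) / N ≤ C / N + (d + ε/2) := by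
    rw [div_le_iff₀ hN0]
    have h := hupper N
    have hexp : (C / ↑N + (d + ε / 2)) * (N:ℝ) = C + (d + ε/2) * N := by
      field_simp
    linarith [hexp ▸ h]
  have hlow : d - ε/2 < ((runMax Y N ω : ℤ) : ℝ) / N := by
    have hdist := hJ N hNJ
    rw [Real.dist_eq, abs_lt] at hdist
    have h2 := hdist.1
    have hle : ((negWalk Y N ω : ℤ) : ℝ) ≤ ((runMax Y N ω : ℤ) : ℝ) := by
      exact_mod_cast negWalk_le_runMax Y (le_refl N) ω
    have h3 : d - ε/2 < ((negWalk Y N ω : ℤ) : ℝ) / N := by linarith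
    have h4 : ((negWalk Y N ω : ℤ) : ℝ) / N ≤ ((runMax Y N ω : ℤ) : ℝ) / N := by gcongr
    linarith
  rw [Real.dist_eq, abs_lt]
  constructor
  · linarith
  · linarith

lemma tendsto_integral_runMax_div (hY : ∀ i, Measurable (Y i))
    (hindep : iIndepFun Y ℙ)
    (hid : ∀ i, IdentDistrib (Y i) (Y 0) ℙ ℙ)
    (hint : Integrable (fun ω => (Y 0 ω : ℝ)) ℙ)
    (hμ : ∫ ω, (Y 0 ω : ℝ) ∂ℙ < 1) :
    Tendsto (fun N : ℕ => ∫ ω, ((runMax Y N ω : ℤ) : ℝ) / N ∂ℙ) atTop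
      (𝓝 (1 - ∫ ω, (Y 0 ω : ℝ) ∂ℙ)) := by
  have hFmeas : ∀ N : ℕ, AEStronglyMeasurable (fun ω => ((runMax Y N ω : ℤ) : ℝ) / N) ℙ :=
    fun N => ((integrable_runMax Y hY N).div_const _).aestronglyMeasurable
  have hbound : ∀ N : ℕ, ∀ᵐ ω ∂ℙ, ‖((runMax Y N ω : ℤ) : ℝ) / N‖ ≤ (1 : ℝ) := by
    intro N
    refine ae_of_all _ fun ω => ?_
    rw [Real.norm_eq_abs]
    rcases Nat.eq_zero_or_pos N with h0 | h0
    · subst h0; simp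
    · have hN0 : (0:ℝ) < N := by exact_mod_cast h0
      rw [abs_div, abs_of_pos hN0, div_le_one hN0,
        abs_of_nonneg (by exact_mod_cast runMax_nonneg Y N ω)]
      exact_mod_cast runMax_le Y N ω
  have hlim : ∀ᵐ ω ∂ℙ, Tendsto (fun N : ℕ => ((runMax Y N ω : ℤ) : ℝ) / N) atTop
      (𝓝 (1 - ∫ ω, (Y 0 ω : ℝ) ∂ℙ)) := by
    filter_upwards [slln Y hY hindep hid hint] with ω hω
    exact tendsto_runMax_div Y ω hμ hω
  have h := tendsto_integral_of_dominated_convergence (fun _ => (1 : ℝ))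
    hFmeas (integrable_const 1) hbound hlim
  simpa using h

/-- The ruin events. -/
def stayLow (Y : ℕ → Ω → ℕ) (n : ℕ) : Set Ω :=
  {ω | ∀ k, 1 ≤ k → k ≤ n → aggClaims Y k ω ≤ k}

lemma measurableSet_stayLow (hY : ∀ i, Measurable (Y i)) (n : ℕ) :
    MeasurableSet (stayLow Y n) := by
  have : stayLow Y n = ⋂ k, ⋂ (_ : 1 ≤ k), ⋂ (_ : k ≤ n),
      (fun ω => aggClaims Y k ω) ⁻¹' {m | m ≤ k} := by
    ext ω
    simp [stayLow, Set.mem_iInter]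
  rw [this]
  exact MeasurableSet.iInter fun k => MeasurableSet.iInter fun _ =>
    MeasurableSet.iInter fun _ => (measurable_aggClaims Y hY k) MeasurableSet.of_discrete

lemma iInter_stayLow : (⋂ n, stayLow Y n) = {ω | ladderEpoch Y ω = ⊤} := by
  ext ω
  simp only [Set.mem_iInter, Set.mem_setOf_eq, stayLow]
  constructor
  · intro h
    rw [ladderEpoch, sInf_eq_top]
    rintro a ⟨k, ⟨hk1, hk2⟩, rfl⟩
    exfalso
    have := h k k hk1 (le_refl k)
    rw [dualWalk] at hk2
    omega
  · intro h n k hk1 hkn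
    rw [ladderEpoch, sInf_eq_top] at h
    by_contra hcon
    have hmem : (k : ℕ∞) ∈ (fun n : ℕ => (n : ℕ∞)) '' {n : ℕ | 1 ≤ n ∧ 0 < dualWalk Y n ω} := by
      refine ⟨k, ⟨hk1, ?_⟩, rfl⟩
      rw [dualWalk]
      omega
    have := h _ hmem
    simp at this
  
lemma tendsto_prob_stayLow (hY : ∀ i, Measurable (Y i)) :
    Tendsto (fun n => ℙ (stayLow Y n)) atTop (𝓝 (ℙ {ω | ladderEpoch Y ω = ⊤})) := by
  rw [← iInter_stayLow]
  refine tendsto_measure_iInter_atTop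
    (fun n => (measurableSet_stayLow Y hY n).nullMeasurableSet) ?_ ⟨0, measure_ne_top _ _⟩
  intro a b hab ω h k hk1 hka
  exact h k hk1 (le_trans hka hab)

end Prob

/-- `1 - P(L̂_1 < ∞) = (1 - μ)/p_0` for the dual walk with drift `μ - 1 < 0`. -/
theorem ladder_epoch_defective
    [IsProbabilityMeasure (ℙ : Measure Ω)]
    (Y : ℕ → Ω → ℕ) (hY : ∀ i, Measurable (Y i))
    (hindep : iIndepFun Y ℙ)
    (hid : ∀ i, IdentDistrib (Y i) (Y 0) ℙ ℙ)
    (hint : Integrable (fun ω => (Y 0 ω : ℝ)) ℙ)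
    (hμ : ∫ ω, (Y 0 ω : ℝ) ∂ℙ < 1)
    (hp0 : 0 < (ℙ {ω | Y 0 ω = 0}).toReal) :
    1 - (ℙ {ω | ladderEpoch Y ω ≠ ⊤}).toReal =
      (1 - ∫ ω, (Y 0 ω : ℝ) ∂ℙ) / (ℙ {ω | Y 0 ω = 0}).toReal := by
  classical
  set μv := ∫ ω, (Y 0 ω : ℝ) ∂ℙ with hμv
  set p0 := (ℙ {ω | Y 0 ω = 0}).toReal with hp0def
  set q := (ℙ {ω | ladderEpoch Y ω = ⊤}).toReal with hqdef
  have hseq : ∀ N : ℕ, ∫ ω, ((runMax Y N ω : ℤ) : ℝ) / N ∂ℙ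
      = (N : ℝ)⁻¹ * ∑ n ∈ Finset.range N,
          ((ℙ {ω | negWalk Y n ω = runMax Y n ω}).toReal * p0) := by
    intro N
    rw [integral_div, integral_runMax Y hY N, div_eq_inv_mul]
    congr 1
    refine Finset.sum_congr rfl fun n _ => ?_
    rw [prob_max_inter_zero Y hY hindep hid n, ENNReal.toReal_mul]
  have h1 := tendsto_integral_runMax_div Y hY hindep hid hint hμ
  have hterm : Tendsto (fun n => (ℙ {ω | negWalk Y n ω = runMax Y n ω}).toReal * p0)
      atTop (𝓝 (q * p0)) := by
    refine Tendsto.mul_const _ ?_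
    have h2 : Tendsto (fun n => ℙ (stayLow Y n)) atTop
        (𝓝 (ℙ {ω | ladderEpoch Y ω = ⊤})) := tendsto_prob_stayLow Y hY
    have h3 : ∀ n : ℕ, ℙ (stayLow Y n) = ℙ {ω | negWalk Y n ω = runMax Y n ω} :=
      fun n => prob_ladder_eq_prob_max Y hY hindep hid n
    have h4 := (ENNReal.tendsto_toReal (measure_ne_top ℙ _)).comp h2
    refine h4.congr fun n => ?_
    simp only [Function.comp_apply, h3 n]
  have h5 := hterm.cesaro
  have h6 : Tendsto (fun N : ℕ => ∫ ω, ((runMax Y N ω : ℤ) : ℝ) / N ∂ℙ) atTop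
      (𝓝 (q * p0)) := h5.congr fun N => (hseq N).symm
  have hkey : q * p0 = 1 - μv := tendsto_nhds_unique h6 h1
  have hmeas_top : MeasurableSet {ω | ladderEpoch Y ω = ⊤} := by
    rw [← iInter_stayLow]
    exact MeasurableSet.iInter (measurableSet_stayLow Y hY)
  have hcompl : {ω | ladderEpoch Y ω ≠ ⊤} = {ω | ladderEpoch Y ω = ⊤}ᶜ := by
    ext ω; simp
  have h7 : ℙ {ω | ladderEpoch Y ω ≠ ⊤} = 1 - ℙ {ω | ladderEpoch Y ω = ⊤} := by
    rw [hcompl]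
    exact prob_compl_eq_one_sub hmeas_top
  have h8 : (ℙ {ω | ladderEpoch Y ω ≠ ⊤}).toReal = 1 - q := by
    rw [h7, ENNReal.toReal_sub_of_le prob_le_one ENNReal.one_ne_top, ENNReal.toReal_one]
  rw [h8]
  have h9 : (1:ℝ) - (1 - q) = q := by ring
  rw [h9, eq_div_iff (ne_of_gt hp0)]
  linarith [hkey]

end
end
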